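/- arXiv:2008.09776 — 5 statements merged into one kernel-verified Lean document; each statement's English description precedes it below -/
import Mathlib

section
/- Let η_i = ∑_{i^(1),…,i^(m-1)=1}^n A(i,i^(1),…,i^(m-1)) ξ_{i^(1)} ⊕ ⋯ ⊕ ξ_{i^(m-1)} for i ∈ [n], where the ξ_i are anticommuting (Grassmann) generators in each tensor factor. Then for any r-element subset I = (i₁ < ⋯ < i_r) of [n], the product η_{i₁}⋯η_{i_r} equals ∑_{I^(1),…,I^(m-1) ∈ C([n],r)} det^[m] A_{I,I^(1),…,I^(m-1)} · ξ_{I^(1)} ⊕ ⋯ ⊕ ξ_{I^(m-1)}, where ξ_{I^(k)} = ξ_{i^(k)_1}⋯ξ_{i^(k)_r} and the sum ranges over r-element subsets of [n]. -/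
open scoped Classical
open Finset Equiv

noncomputable section
set_option linter.unusedSectionVars false
set_option linter.unusedVariables false

variable {F : Type*} [Field F] [CharZero F]

/-- The hyperdeterminant `det^[m]` of an `m`-dimensional tensor of size `n`:
`∑_{σ₁,…,σ_{m-1}} sgn(σ₁⋯σ_{m-1}) ∏_i A(i, σ₁ i, …, σ_{m-1} i)`, encoded as a sum over
`m`-tuples of permutations whose `0`-th component is forced to be the identity. -/
def hyperdet (m n : ℕ) (A : (Fin m → Fin n) → F) : F :=
  ∑ σ : Fin m → Equiv.Perm (Fin n),
    if (∀ k : Fin m, k.1 = 0 → σ k = 1) then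
      (∏ k, ((Equiv.Perm.sign (σ k) : ℤ) : F)) * ∏ i, A fun k => σ k i
    else 0

/-- `blk l n j i` is the `i`-th entry of the `j`-th consecutive block of length `l` in `[l*n]`. -/
def blk (l n : ℕ) (j : Fin n) (i : Fin l) : Fin (l * n) :=
  ⟨j.1 * l + i.1, by
    have hi := i.2; have hj := j.2
    calc j.1 * l + i.1 < (j.1 + 1) * l := by rw [Nat.add_mul, Nat.one_mul]; omega
      _ ≤ n * l := Nat.mul_le_mul_right l hj
      _ = l * n := Nat.mul_comm n l⟩

/-- A permutation of `[l*n]` is block-increasing if it is increasing on each of the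
`n` consecutive blocks of length `l`. -/
def BlockInc (l n : ℕ) (σ : Equiv.Perm (Fin (l * n))) : Prop :=
  ∀ j : Fin n, StrictMono fun i : Fin l => σ (blk l n j i)

/-- The `j`-th block of `σ`, as a subset of `[l*n]`. -/
def blkSet (l n : ℕ) (σ : Equiv.Perm (Fin (l * n))) (j : Fin n) : Finset (Fin (l * n)) :=
  Finset.image (fun i => σ (blk l n j i)) Finset.univ

/-- The hyperpfaffian `Pf^[l,m]` of an `m`-dimensional `l`-block array of size `l*n`
(the `m` dimensions are indexed by an arbitrary finite type `ι`). -/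
def hyperpf (l n : ℕ) {ι : Type*} [Fintype ι]
    (B : (ι → Finset (Fin (l * n))) → F) : F :=
  (n.factorial : F)⁻¹ *
    ∑ σ : ι → Equiv.Perm (Fin (l * n)),
      if ∀ s, BlockInc l n (σ s) then
        (∏ s, ((Equiv.Perm.sign (σ s) : ℤ) : F)) *
          ∏ k : Fin n, B fun s => blkSet l n (σ s) k
      else 0

/-- The hyperhafnian `Hf^[l,m]` (same sum as the hyperpfaffian, without signs). -/
def hyperhf (l n : ℕ) {ι : Type*} [Fintype ι]
    (B : (ι → Finset (Fin (l * n))) → F) : F :=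
  (n.factorial : F)⁻¹ *
    ∑ σ : ι → Equiv.Perm (Fin (l * n)),
      if ∀ s, BlockInc l n (σ s) then
        ∏ k : Fin n, B fun s => blkSet l n (σ s) k
      else 0

/-- The Grassmann generator `ξ_i` in the exterior algebra on `Fin n → F`. -/
def xi (F : Type*) [Field F] (n : ℕ) (i : Fin n) : ExteriorAlgebra F (Fin n → F) :=
  ExteriorAlgebra.ι F (Pi.single i 1)

/-- `ξ_I`, the product of the generators `ξ_i`, `i ∈ I`, in increasing order. -/
def xiSet (F : Type*) [Field F] (n : ℕ) (I : Finset (Fin n)) :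
    ExteriorAlgebra F (Fin n → F) :=
  ((I.sort (· ≤ ·)).map (xi F n)).prod

/-- `ξ = ξ₁ξ₂⋯ξ_n`. -/
def xiFull (F : Type*) [Field F] (n : ℕ) : ExteriorAlgebra F (Fin n → F) :=
  ((List.finRange n).map (xi F n)).prod

/-- `η_i = ∑ A(i, i⁽¹⁾,…,i⁽ᵐ⁻¹⁾) ξ_{i⁽¹⁾} ⊕ ⋯ ⊕ ξ_{i⁽ᵐ⁻¹⁾}` in the `(m-1)`-fold tensor
product of exterior algebras (here `m = q+1`). -/
def eta {F : Type*} [Field F] {q n : ℕ} (A : (Fin (q + 1) → Fin n) → F) (i : Fin n) :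
    PiTensorProduct F (fun _ : Fin q => ExteriorAlgebra F (Fin n → F)) :=
  ∑ f : Fin q → Fin n,
    A (Fin.cons i f) • PiTensorProduct.tprod F (fun k => xi F n (f k))

section AuxLemmas

variable {n r q : ℕ}

lemma xiSet_eq_iMulti (J : Finset (Fin n)) (h : J.card = r) :
    xiSet F n J
      = ExteriorAlgebra.ιMulti F r (fun t => (Pi.single (J.orderEmbOfFin h t) 1 : Fin n → F)) := by
  rw [ExteriorAlgebra.ιMulti_apply, xiSet]
  congr 1
  apply List.ext_getElem
  · simp [h]
  · intro i h1 h2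
    simp [Finset.orderEmbOfFin_apply, xi]

lemma ofFn_xi_eq (g : Fin r → Fin n) :
    (List.ofFn fun t => xi F n (g t)).prod
      = ExteriorAlgebra.ιMulti F r (fun t => (Pi.single (g t) 1 : Fin n → F)) :=
  (ExteriorAlgebra.ιMulti_apply (R := F) _).symm

lemma iMulti_zero_of_not_inj (g : Fin r → Fin n) (hg : ¬ Function.Injective g) :
    ExteriorAlgebra.ιMulti F r (fun t => (Pi.single (g t) 1 : Fin n → F)) = 0 := by
  simp only [Function.Injective, not_forall] at hg
  obtain ⟨i, j, hij, hne⟩ := hg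
  exact AlternatingMap.map_eq_zero_of_eq _ _ (by rw [hij]) hne

lemma iMulti_perm (J : Finset (Fin n)) (h : J.card = r) (σ : Equiv.Perm (Fin r)) :
    ExteriorAlgebra.ιMulti F r (fun t => (Pi.single (J.orderEmbOfFin h (σ t)) 1 : Fin n → F))
      = ((Equiv.Perm.sign σ : ℤ) : F) • xiSet F n J := by
  have : (fun t => (Pi.single (J.orderEmbOfFin h (σ t)) 1 : Fin n → F))
      = (fun t => (Pi.single (J.orderEmbOfFin h t) 1 : Fin n → F)) ∘ σ := rfl
  rw [this, AlternatingMap.map_perm, xiSet_eq_iMulti J h, Units.smul_def,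
    Int.cast_smul_eq_zsmul]

def colSet (g : Fin r → Fin n) : Finset (Fin n) := Finset.image g Finset.univ

lemma colSet_card {g : Fin r → Fin n} (hg : Function.Injective g) : (colSet g).card = r := by
  rw [colSet, Finset.card_image_of_injective _ hg, Finset.card_univ, Fintype.card_fin]

def colPerm (g : Fin r → Fin n) : Equiv.Perm (Fin r) :=
  if hg : Function.Injective g then
    Equiv.ofBijective
      (fun t => ((colSet g).orderIsoOfFin (colSet_card hg)).symm
        ⟨g t, by simp [colSet, Finset.mem_image]⟩)
      ((Fintype.bijective_iff_injective_and_card _).2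
        ⟨fun a b hab => by
          apply hg
          have := congrArg ((colSet g).orderIsoOfFin (colSet_card hg)) hab
          simpa [Subtype.ext_iff] using this, rfl⟩)
  else 1

lemma colPerm_spec {g : Fin r → Fin n} (hg : Function.Injective g) (t : Fin r) :
    (colSet g).orderEmbOfFin (colSet_card hg) (colPerm g t) = g t := by
  rw [colPerm, dif_pos hg]
  rw [← Finset.coe_orderIsoOfFin_apply]
  simp

lemma colSet_of_emb (J : Finset (Fin n)) (h : J.card = r) (σ : Equiv.Perm (Fin r)) :
    colSet (fun t => J.orderEmbOfFin h (σ t)) = J := by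
  ext x
  simp only [colSet, Finset.mem_image, Finset.mem_univ, true_and]
  constructor
  · rintro ⟨t, rfl⟩; exact Finset.orderEmbOfFin_mem _ _ _
  · intro hx
    have : x ∈ Set.range (J.orderEmbOfFin h) := by
      rw [Finset.range_orderEmbOfFin]; exact hx
    obtain ⟨t, ht⟩ := this
    exact ⟨σ.symm t, by simpa using ht⟩

lemma orderEmbOfFin_congr {α : Type*} [LinearOrder α] {s t : Finset α} (hst : s = t) {k : ℕ}
    (hs : s.card = k) (x : Fin k) :
    s.orderEmbOfFin hs x = t.orderEmbOfFin (hst ▸ hs) x := by subst hst; rfl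

lemma colPerm_of_emb (J : Finset (Fin n)) (h : J.card = r) (σ : Equiv.Perm (Fin r)) :
    colPerm (fun t => J.orderEmbOfFin h (σ t)) = σ := by
  have hg : Function.Injective (fun t => J.orderEmbOfFin h (σ t)) :=
    fun a b hab => σ.injective ((J.orderEmbOfFin h).injective hab)
  ext t
  have h1 := colPerm_spec hg t
  rw [orderEmbOfFin_congr (colSet_of_emb J h σ)] at h1
  exact congrArg Fin.val ((J.orderEmbOfFin h).injective h1)

lemma list_prod_map_sum {B ι α : Type*} [Ring B] [Algebra F B] [Fintype α]
    (c : ι → α → F) (v : ι → α → B) :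
    ∀ L : List ι,
      (L.map fun i => ∑ f : α, c i f • v i f).prod
        = ∑ G : Fin L.length → α,
            (∏ t, c (L.get t) (G t)) • (List.ofFn fun t => v (L.get t) (G t)).prod := by
  intro L
  induction L with
  | nil =>
      simp [List.ofFn_zero]
  | cons a L ih =>
      rw [List.map_cons, List.prod_cons, ih, Finset.sum_mul]
      rw [show (∑ G : Fin (a :: L).length → α,
            (∏ t, c ((a :: L).get t) (G t))
              • (List.ofFn fun t => v ((a :: L).get t) (G t)).prod)
          = ∑ p : α × (Fin L.length → α),
            (∏ t, c ((a :: L).get t) ((Fin.consEquiv fun _ => α) p t))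
              • (List.ofFn fun t => v ((a :: L).get t)
                  ((Fin.consEquiv fun _ => α) p t)).prod
          from (Equiv.sum_comp (Fin.consEquiv fun _ => α) _).symm]
      rw [Fintype.sum_prod_type]
      refine Finset.sum_congr rfl fun f _ => ?_
      rw [smul_mul_assoc, Finset.mul_sum, Finset.smul_sum]
      refine Finset.sum_congr rfl fun G _ => ?_
      rw [← smul_mul_assoc]
      have h1 : (∏ t, c ((a :: L).get t) ((Fin.consEquiv fun _ => α) (f, G) t))
          = c a f * ∏ t, c (L.get t) (G t) := by
        exact Fin.prod_univ_succ _
      have h2 : (List.ofFn fun t => v ((a :: L).get t) ((Fin.consEquiv fun _ => α) (f, G) t))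
          = v a f :: List.ofFn fun t => v (L.get t) (G t) := by
        exact List.ofFn_succ
      rw [h1, h2, List.prod_cons, ← smul_mul_smul_comm, smul_mul_assoc]

lemma prod_ofFn_tprod {E : Type*} [Ring E] [Algebra F E]
    (x : Fin r → (Fin q → E)) :
    (List.ofFn fun t => PiTensorProduct.tprod F (x t)).prod
      = PiTensorProduct.tprod F (fun k => (List.ofFn fun t => x t k).prod) := by
  have h1 : (fun k => (List.ofFn fun t => x t k).prod) = (List.ofFn x).prod := by
    funext k
    rw [Pi.list_prod_apply k (List.ofFn x), List.map_ofFn]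
    rfl
  rw [h1, show PiTensorProduct.tprod F ((List.ofFn x).prod)
      = PiTensorProduct.tprodMonoidHom F ((List.ofFn x).prod) from rfl,
    map_list_prod, List.map_ofFn]
  rfl

lemma hyperdet_expand (A' : (Fin (q + 1) → Fin r) → F) :
    hyperdet (q + 1) r A'
      = ∑ σ : Fin q → Equiv.Perm (Fin r),
          (∏ k, ((Equiv.Perm.sign (σ k) : ℤ) : F))
            * ∏ i, A' (Fin.cons i fun k => σ k i) := by
  rw [hyperdet]
  rw [show (∑ σ : Fin (q + 1) → Equiv.Perm (Fin r),
        if (∀ k : Fin (q + 1), k.1 = 0 → σ k = 1) then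
          (∏ k, ((Equiv.Perm.sign (σ k) : ℤ) : F)) * ∏ i, A' fun k => σ k i
        else 0)
      = ∑ p : Equiv.Perm (Fin r) × (Fin q → Equiv.Perm (Fin r)),
        (fun σ : Fin (q + 1) → Equiv.Perm (Fin r) =>
          if (∀ k : Fin (q + 1), k.1 = 0 → σ k = 1) then
            (∏ k, ((Equiv.Perm.sign (σ k) : ℤ) : F)) * ∏ i, A' fun k => σ k i
          else 0) ((Fin.consEquiv fun _ => Equiv.Perm (Fin r)) p)
      from (Equiv.sum_comp (Fin.consEquiv fun _ => Equiv.Perm (Fin r)) _).symm]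
  rw [Fintype.sum_prod_type]
  have hcond : ∀ (h : Equiv.Perm (Fin r)) (σ : Fin q → Equiv.Perm (Fin r)),
      (∀ k : Fin (q + 1), k.1 = 0 →
        (Fin.cons h σ : Fin (q+1) → Equiv.Perm (Fin r)) k = 1) ↔ h = 1 := by
    intro h σ
    constructor
    · intro hk
      have := hk 0 rfl
      simpa using this
    · intro hh k hk
      have : k = 0 := Fin.ext hk
      subst this; simpa using hh
  have key : ∀ h : Equiv.Perm (Fin r), ∀ σ : Fin q → Equiv.Perm (Fin r),
      (fun σ' : Fin (q + 1) → Equiv.Perm (Fin r) =>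
          if (∀ k : Fin (q + 1), k.1 = 0 → σ' k = 1) then
            (∏ k, ((Equiv.Perm.sign (σ' k) : ℤ) : F)) * ∏ i, A' fun k => σ' k i
          else 0) ((Fin.consEquiv fun _ => Equiv.Perm (Fin r)) (h, σ))
      = if h = 1 then
          (∏ k, ((Equiv.Perm.sign (σ k) : ℤ) : F)) * ∏ i, A' (Fin.cons i fun k => σ k i)
        else 0 := by
    intro h σ
    simp only [Fin.consEquiv_apply]
    rw [if_congr (hcond h σ) rfl rfl]
    by_cases hh : h = 1
    · subst hh
      rw [if_pos rfl, if_pos rfl]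
      congr 1
      · rw [Fin.prod_univ_succ]
        simp
      · refine Finset.prod_congr rfl fun i _ => ?_
        congr 1
        funext k
        refine Fin.cases ?_ (fun k' => ?_) k <;> simp
    · rw [if_neg hh, if_neg hh]
  simp only [key]
  rw [Finset.sum_comm]
  simp [Finset.sum_ite_eq']

lemma sum_fun_cast {α M : Type*} [AddCommMonoid M] [Fintype α] {a b : ℕ} (h : a = b)
    (f : (Fin a → α) → M) :
    ∑ g : Fin a → α, f g = ∑ g : Fin b → α, f (fun t => g (Fin.cast h t)) := by
  subst h; rfl

lemma prod_fin_cast {M : Type*} [CommMonoid M] {a b : ℕ} (h : a = b) (f : Fin a → M) :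
    ∏ t, f t = ∏ t : Fin b, f (Fin.cast h.symm t) := by
  subst h; rfl

lemma ofFn_fin_cast {β : Type*} {a b : ℕ} (h : a = b) (f : Fin a → β) :
    List.ofFn f = List.ofFn (fun t : Fin b => f (Fin.cast h.symm t)) := by
  subst h; rfl

end AuxLemmas

/-- Proposition 1 (minor expansion of products of the `η_i`). -/
theorem eta_prod_minor_expansion (q n r : ℕ) (hm : Even (q + 1)) (hn : 0 < n)
    (A : (Fin (q + 1) → Fin n) → F) (I : Finset (Fin n)) (hI : I.card = r) :
    ((I.sort (· ≤ ·)).map (eta A)).prod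
    = ∑ J : Fin q → Finset (Fin n),
        if h : ∀ k, (J k).card = r then
          hyperdet (q + 1) r (fun a =>
              A (Fin.cons (I.orderEmbOfFin hI (a 0))
                (fun k => (J k).orderEmbOfFin (h k) (a k.succ)))) •
            PiTensorProduct.tprod F (fun k => xiSet F n (J k))
        else 0 := by
  classical
  have hs : (I.sort (· ≤ ·)).length = r := by rw [Finset.length_sort, hI]
  have hget : ∀ t : Fin r, (I.sort (· ≤ ·)).get (Fin.cast hs.symm t) = I.orderEmbOfFin hI t := by
    intro t
    rw [Finset.orderEmbOfFin_apply]
    simp [List.get_eq_getElem]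
  -- Step 1: expand the product of sums
  have step1 : ((I.sort (· ≤ ·)).map (eta A)).prod
      = ∑ G : Fin r → (Fin q → Fin n),
          (∏ t : Fin r, A (Fin.cons (I.orderEmbOfFin hI t) (G t)))
            • (List.ofFn fun t : Fin r =>
                PiTensorProduct.tprod F fun k => xi F n (G t k)).prod := by
    have e1 := list_prod_map_sum (F := F)
      (fun i (f : Fin q → Fin n) => A (Fin.cons i f))
      (fun i (f : Fin q → Fin n) => PiTensorProduct.tprod F (fun k => xi F n (f k)))
      (I.sort (· ≤ ·))
    have e2 : (I.sort (· ≤ ·)).map (eta A)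
        = (I.sort (· ≤ ·)).map (fun i => ∑ f : Fin q → Fin n,
            A (Fin.cons i f) • PiTensorProduct.tprod F (fun k => xi F n (f k))) := rfl
    rw [e2, e1, sum_fun_cast (α := Fin q → Fin n) hs]
    refine Finset.sum_congr rfl fun G _ => ?_
    rw [prod_fin_cast hs, ofFn_fin_cast hs]
    simp only [hget]
    rfl
  rw [step1]
  -- Steps 2 and 3: collapse products of tprods and swap the two indices
  have step23 : (∑ G : Fin r → (Fin q → Fin n),
          (∏ t : Fin r, A (Fin.cons (I.orderEmbOfFin hI t) (G t)))
            • (List.ofFn fun t : Fin r =>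
                PiTensorProduct.tprod F fun k => xi F n (G t k)).prod)
      = ∑ H : Fin q → Fin r → Fin n,
          (∏ t : Fin r, A (Fin.cons (I.orderEmbOfFin hI t) (fun k => H k t)))
            • PiTensorProduct.tprod F (fun k =>
                ExteriorAlgebra.ιMulti F r (fun t => (Pi.single (H k t) 1 : Fin n → F))) := by
    refine ((Equiv.sum_comp (⟨fun H t k => H k t, fun G k t => G t k, fun _ => rfl,
        fun _ => rfl⟩ : (Fin q → Fin r → Fin n) ≃ (Fin r → Fin q → Fin n))
        (fun G => (∏ t : Fin r, A (Fin.cons (I.orderEmbOfFin hI t) (G t)))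
          • (List.ofFn fun t : Fin r =>
              PiTensorProduct.tprod F fun k => xi F n (G t k)).prod)).symm).trans ?_
    refine Finset.sum_congr rfl fun H _ => ?_
    show (∏ t : Fin r, A (Fin.cons (I.orderEmbOfFin hI t) (fun k => H k t)))
          • (List.ofFn fun t : Fin r =>
              PiTensorProduct.tprod F fun k => xi F n (H k t)).prod = _
    rw [prod_ofFn_tprod (fun t k => xi F n (H k t))]
    congr 1
  rw [step23]
  -- Step 4: restrict to columnwise-injective H
  have step4 : (∑ H : Fin q → Fin r → Fin n,
          (∏ t : Fin r, A (Fin.cons (I.orderEmbOfFin hI t) (fun k => H k t)))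
            • PiTensorProduct.tprod F (fun k =>
                ExteriorAlgebra.ιMulti F r (fun t => (Pi.single (H k t) 1 : Fin n → F))))
      = ∑ H ∈ Finset.univ.filter
            (fun H : Fin q → Fin r → Fin n => ∀ k, Function.Injective (H k)),
          (∏ t : Fin r, A (Fin.cons (I.orderEmbOfFin hI t) (fun k => H k t)))
            • PiTensorProduct.tprod F (fun k =>
                ExteriorAlgebra.ιMulti F r (fun t => (Pi.single (H k t) 1 : Fin n → F))) := by
    symm
    refine Finset.sum_filter_of_ne ?_
    intro H _ hne
    by_contra hc
    push_neg at hc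
    obtain ⟨k0, hk0⟩ := hc
    apply hne
    rw [MultilinearMap.map_coord_zero (PiTensorProduct.tprod F) k0
      (iMulti_zero_of_not_inj _ hk0), smul_zero]
  rw [step4]
  -- the pair-indexed summand
  set gterm : (Fin q → Finset (Fin n)) × (Fin q → Equiv.Perm (Fin r)) →
      PiTensorProduct F (fun _ : Fin q => ExteriorAlgebra F (Fin n → F)) :=
    fun P => if h : ∀ k, (P.1 k).card = r then
        (∏ t : Fin r, A (Fin.cons (I.orderEmbOfFin hI t)
            (fun k => (P.1 k).orderEmbOfFin (h k) (P.2 k t))))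
          • ((∏ k, ((Equiv.Perm.sign (P.2 k) : ℤ) : F))
              • PiTensorProduct.tprod F (fun k => xiSet F n (P.1 k)))
      else 0 with hgterm
  -- Step 5: reindex by (set, permutation) pairs
  have step5 : (∑ H ∈ Finset.univ.filter
            (fun H : Fin q → Fin r → Fin n => ∀ k, Function.Injective (H k)),
          (∏ t : Fin r, A (Fin.cons (I.orderEmbOfFin hI t) (fun k => H k t)))
            • PiTensorProduct.tprod F (fun k =>
                ExteriorAlgebra.ιMulti F r (fun t => (Pi.single (H k t) 1 : Fin n → F))))
      = ∑ P ∈ Finset.univ.filter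
            (fun P : (Fin q → Finset (Fin n)) × (Fin q → Equiv.Perm (Fin r)) =>
              ∀ k, (P.1 k).card = r), gterm P := by
    refine Finset.sum_bij'
      (i := fun H _ => (fun k => colSet (H k), fun k => colPerm (H k)))
      (j := fun P hP => fun k t =>
        (P.1 k).orderEmbOfFin ((Finset.mem_filter.mp hP).2 k) (P.2 k t))
      ?_ ?_ ?_ ?_ ?_
    · intro H hH
      rw [Finset.mem_filter] at hH ⊢
      exact ⟨Finset.mem_univ _, fun k => colSet_card (hH.2 k)⟩
    · intro P hP
      rw [Finset.mem_filter]
      exact ⟨Finset.mem_univ _, fun k a b hab =>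
        (P.2 k).injective (((P.1 k).orderEmbOfFin _).injective hab)⟩
    · intro H hH
      funext k t
      exact colPerm_spec ((Finset.mem_filter.mp hH).2 k) t
    · intro P hP
      have hc := (Finset.mem_filter.mp hP).2
      refine Prod.ext ?_ ?_
      · funext k
        exact colSet_of_emb (P.1 k) (hc k) (P.2 k)
      · funext k
        exact congrArg (fun e => e) (colPerm_of_emb (P.1 k) (hc k) (P.2 k))
    · intro H hH
      have hHk : ∀ k, Function.Injective (H k) := (Finset.mem_filter.mp hH).2
      rw [hgterm]
      simp only
      rw [dif_pos (fun k => colSet_card (hHk k))]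
      have hcol : ∀ k, ExteriorAlgebra.ιMulti F r
            (fun t => (Pi.single (H k t) 1 : Fin n → F))
          = ((Equiv.Perm.sign (colPerm (H k)) : ℤ) : F) • xiSet F n (colSet (H k)) := by
        intro k
        rw [← iMulti_perm (colSet (H k)) (colSet_card (hHk k)) (colPerm (H k))]
        congr 1
        funext t
        rw [colPerm_spec (hHk k) t]
      have h2 : PiTensorProduct.tprod F (fun k =>
            ExteriorAlgebra.ιMulti F r (fun t => (Pi.single (H k t) 1 : Fin n → F)))
          = (∏ k, ((Equiv.Perm.sign (colPerm (H k)) : ℤ) : F))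
              • PiTensorProduct.tprod F (fun k => xiSet F n (colSet (H k))) := by
        rw [show (fun k => ExteriorAlgebra.ιMulti F r
              (fun t => (Pi.single (H k t) 1 : Fin n → F)))
            = (fun k => ((Equiv.Perm.sign (colPerm (H k)) : ℤ) : F)
                • xiSet F n (colSet (H k))) from funext hcol]
        exact MultilinearMap.map_smul_univ _ _ _
      rw [h2]
      have hspec : ∀ k t, (colSet (H k)).orderEmbOfFin (colSet_card (hHk k))
          (colPerm (H k) t) = H k t := fun k t => colPerm_spec (hHk k) t
      congr 1
      refine Finset.prod_congr rfl fun t _ => ?_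
      simp only [hspec]
  rw [step5]
  -- Step 6: extend to the full pair sum
  have step6 : (∑ P ∈ Finset.univ.filter
            (fun P : (Fin q → Finset (Fin n)) × (Fin q → Equiv.Perm (Fin r)) =>
              ∀ k, (P.1 k).card = r), gterm P)
      = ∑ P : (Fin q → Finset (Fin n)) × (Fin q → Equiv.Perm (Fin r)), gterm P := by
    refine Finset.sum_filter_of_ne ?_
    intro P _ hne
    by_contra hc
    exact hne (by rw [hgterm]; simp only; rw [dif_neg hc])
  rw [step6]
  -- Step 7: identify with the hyperdeterminant expansion
  rw [Fintype.sum_prod_type]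
  refine Finset.sum_congr rfl fun J _ => ?_
  by_cases h : ∀ k, (J k).card = r
  · rw [dif_pos h, hyperdet_expand, Finset.sum_smul]
    refine Finset.sum_congr rfl fun σ _ => ?_
    rw [hgterm]
    simp only
    rw [dif_pos h, smul_smul, mul_comm, mul_smul, smul_smul]
    congr 2
  · rw [dif_neg h]
    rw [hgterm]
    simp only
    rw [Finset.sum_eq_zero]
    intro σ _
    rw [dif_neg h]
end
end

section
/- (Full exterior algebra identity) With η_i defined as above, η₁η₂⋯η_n = det^[m](A) · ξ ⊕ ⋯ ⊕ ξ ((m−1) factors), where ξ = ξ₁ξ₂⋯ξ_n. -/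
open scoped Classical
open Finset Equiv

noncomputable section

variable {F : Type*} [Field F] [CharZero F]

section Aux

variable {F : Type*} [Field F]

/-- Expanding a product of sums (noncommutative, ordered). -/
lemma ofFn_prod_sum {R : Type*} [Semiring R] {α : Type*} [Fintype α] :
    ∀ (n : ℕ) (t : Fin n → α → R),
    (List.ofFn fun i => ∑ a, t i a).prod
      = ∑ g : Fin n → α, (List.ofFn fun i => t i (g i)).prod := by
  intro n
  induction n with
  | zero =>
      intro t
      simp [List.ofFn_zero]
  | succ n ih =>
      intro t
      rw [← (Fin.consEquiv (fun _ : Fin (n + 1) => α)).sum_comp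
        (fun g => (List.ofFn fun i => t i (g i)).prod)]
      rw [Fintype.sum_prod_type]
      simp only [Fin.consEquiv_apply, List.ofFn_succ, Fin.cons_zero, Fin.cons_succ,
        List.prod_cons]
      rw [Finset.sum_mul]
      refine Finset.sum_congr rfl fun a _ => ?_
      rw [ih (fun i b => t i.succ b), Finset.mul_sum]

/-- Pulling scalars out of an ordered product. -/
lemma ofFn_prod_smul {R : Type*} [Semiring R] [Module F R]
    [SMulCommClass F R R] [IsScalarTower F R R] :
    ∀ (n : ℕ) (c : Fin n → F) (x : Fin n → R),
    (List.ofFn fun i => c i • x i).prod = (∏ i, c i) • (List.ofFn x).prod := by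
  intro n
  induction n with
  | zero => intro c x; simp
  | succ n ih =>
      intro c x
      rw [List.ofFn_succ, List.ofFn_succ, List.prod_cons, List.prod_cons,
        ih (fun i => c i.succ) (fun i => x i.succ), Fin.prod_univ_succ,
        smul_mul_assoc, mul_smul_comm, smul_smul]

/-- An ordered product of pure tensors is the pure tensor of componentwise products. -/
lemma ofFn_prod_tprod {ι : Type*} [Fintype ι] {A : ι → Type*}
    [∀ i, Semiring (A i)] [∀ i, Algebra F (A i)] :
    ∀ (n : ℕ) (x : Fin n → (i : ι) → A i),
    (List.ofFn fun j => PiTensorProduct.tprod F (x j)).prod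
      = PiTensorProduct.tprod F (fun i => (List.ofFn fun j => x j i).prod) := by
  intro n
  induction n with
  | zero =>
      intro x
      simp only [List.ofFn_zero, List.prod_nil]
      rw [PiTensorProduct.one_def]
      congr 1
  | succ n ih =>
      intro x
      rw [List.ofFn_succ, List.prod_cons, ih (fun j => x j.succ)]
      rw [PiTensorProduct.tprod_mul_tprod]
      congr 1
      funext i
      rw [List.ofFn_succ, List.prod_cons]
      rfl

/-- The single-index Grassmann generators are linearly independent as vectors. -/
lemma single_one_injective (n : ℕ) :
    Function.Injective (fun i : Fin n => (Pi.single i 1 : Fin n → F)) := by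
  intro a b hab
  by_contra hne
  have h := congrFun hab a
  simp only [Pi.single_eq_same, Pi.single_eq_of_ne hne] at h
  exact one_ne_zero h

/-- Reindexing the hyperdeterminant over tuples of permutations omitting the 0-th. -/
lemma hyperdet_eq_sum (q n : ℕ) (A : (Fin (q + 1) → Fin n) → F) :
    hyperdet (q + 1) n A
      = ∑ σ : Fin q → Equiv.Perm (Fin n),
          (∏ k, ((Equiv.Perm.sign (σ k) : ℤ) : F)) *
            ∏ i, A (Fin.cons i fun k => σ k i) := by
  unfold hyperdet
  rw [← (Fin.consEquiv (fun _ : Fin (q + 1) => Equiv.Perm (Fin n))).sum_comp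
    (fun σ => if (∀ k : Fin (q+1), k.1 = 0 → σ k = 1) then
      (∏ k, ((Equiv.Perm.sign (σ k) : ℤ) : F)) * ∏ i, A fun k => σ k i else 0)]
  rw [Fintype.sum_prod_type]
  have key : ∀ p : Equiv.Perm (Fin n), ∀ τ : Fin q → Equiv.Perm (Fin n),
      (∀ k : Fin (q+1), k.1 = 0 → (Fin.consEquiv fun _ : Fin (q+1) => Equiv.Perm (Fin n)) (p, τ) k = 1) ↔ p = 1 := by
    intro p τ
    constructor
    · intro h; exact h 0 rfl
    · intro hp k hk
      have : k = 0 := Fin.ext hk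
      subst this; simpa using hp
  have : ∀ p : Equiv.Perm (Fin n),
      (∑ τ : Fin q → Equiv.Perm (Fin n),
        if (∀ k : Fin (q+1), k.1 = 0 → (Fin.consEquiv fun _ : Fin (q+1) => Equiv.Perm (Fin n)) (p, τ) k = 1) then
          (∏ k, ((Equiv.Perm.sign ((Fin.consEquiv fun _ : Fin (q+1) => Equiv.Perm (Fin n)) (p, τ) k) : ℤ) : F)) *
            ∏ i, A fun k => (Fin.consEquiv fun _ : Fin (q+1) => Equiv.Perm (Fin n)) (p, τ) k i else 0)
      = if p = 1 then
          (∑ τ : Fin q → Equiv.Perm (Fin n),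
            (∏ k, ((Equiv.Perm.sign ((Fin.consEquiv fun _ : Fin (q+1) => Equiv.Perm (Fin n)) (p, τ) k) : ℤ) : F)) *
              ∏ i, A fun k => (Fin.consEquiv fun _ : Fin (q+1) => Equiv.Perm (Fin n)) (p, τ) k i) else 0 := by
    intro p
    by_cases hp : p = 1
    · simp only [hp, if_true]
      refine Finset.sum_congr rfl fun τ _ => ?_
      rw [if_pos ((key 1 τ).mpr rfl)]
    · simp only [hp, if_false]
      refine Finset.sum_eq_zero fun τ _ => ?_
      rw [if_neg (fun h => hp ((key p τ).mp h))]
  rw [Finset.sum_congr rfl fun p _ => this p, Finset.sum_ite_eq' Finset.univ 1]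
  rw [if_pos (Finset.mem_univ _)]
  refine Finset.sum_congr rfl fun τ _ => ?_
  simp only [Fin.consEquiv_apply]
  congr 1
  · rw [Fin.prod_univ_succ]
    simp [Fin.cons_zero, Fin.cons_succ]
  · refine Finset.prod_congr rfl fun i _ => ?_
    congr 1
    funext k
    refine Fin.cases ?_ (fun k => ?_) k <;> simp [Fin.cons_zero, Fin.cons_succ]

end Aux

/-- The full product `η₁⋯η_n` equals `det^[m](A) · ξ ⊕ ⋯ ⊕ ξ`. -/
theorem eta_prod_full (q n : ℕ) (hm : Even (q + 1)) (hn : 0 < n)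
    (A : (Fin (q + 1) → Fin n) → F) :
    ((List.finRange n).map (eta A)).prod
    = hyperdet (q + 1) n A •
        PiTensorProduct.tprod F (fun _ : Fin q => xiFull F n) := by
  classical
  -- Step 1: expand the product of sums
  rw [← List.ofFn_eq_map]
  unfold eta
  rw [ofFn_prod_sum n (fun i f => A (Fin.cons i f) •
    PiTensorProduct.tprod F (fun k => xi F n (f k)))]
  -- Step 2: in each summand pull out scalars and merge the pure tensors
  have step2 : ∀ g : Fin n → (Fin q → Fin n),
      (List.ofFn fun i => A (Fin.cons i (g i)) •
          PiTensorProduct.tprod F (fun k => xi F n (g i k))).prod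
      = (∏ i, A (Fin.cons i (g i))) •
          PiTensorProduct.tprod F (fun k =>
            ExteriorAlgebra.ιMulti F n (fun i => (Pi.single (g i k) 1 : Fin n → F))) := by
    intro g
    rw [ofFn_prod_smul n (fun i => A (Fin.cons i (g i)))
        (fun i => PiTensorProduct.tprod F fun k => xi F n (g i k)),
      ofFn_prod_tprod n (fun i k => xi F n (g i k))]
    congr 1
  rw [Finset.sum_congr rfl (fun g _ => step2 g)]
  -- notation for the summands
  set T : (Fin n → Fin q → Fin n) →
      PiTensorProduct F (fun _ : Fin q => ExteriorAlgebra F (Fin n → F)) :=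
    fun g => (∏ i, A (Fin.cons i (g i))) •
      PiTensorProduct.tprod F (fun k =>
        ExteriorAlgebra.ιMulti F n (fun i => (Pi.single (g i k) 1 : Fin n → F))) with hT
  -- Step 3: terms with some non-injective column vanish
  have hzero : ∀ g : Fin n → Fin q → Fin n, ∀ k0 : Fin q,
      ¬ Function.Injective (fun i => g i k0) → T g = 0 := by
    intro g k0 hki
    have hvz : ExteriorAlgebra.ιMulti F n
        (fun i => (Pi.single (g i k0) 1 : Fin n → F)) = 0 := by
      apply AlternatingMap.map_eq_zero_of_not_injective
      intro hinj
      exact hki fun a b hab => hinj (by simp only [hab])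
    have := MultilinearMap.map_coord_zero (PiTensorProduct.tprod F)
      (m := fun k => ExteriorAlgebra.ιMulti F n
        (fun i => (Pi.single (g i k) 1 : Fin n → F))) k0 hvz
    rw [hT]
    simp only [this, smul_zero]
  -- Step 4: reindex over tuples of permutations
  have step4 : ∑ g : Fin n → Fin q → Fin n, T g
      = ∑ σ : Fin q → Equiv.Perm (Fin n), T (fun i k => σ k i) := by
    refine Finset.sum_bij_ne_zero (fun g _ hg => fun k =>
      Equiv.ofBijective (fun i => g i k) ?_) ?_ ?_ ?_ ?_
    · refine Finite.injective_iff_bijective.mp ?_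
      by_contra hki
      exact hg (hzero g k hki)
    · intros; exact Finset.mem_univ _
    · intro g₁ h₁₁ h₁₂ g₂ h₂₁ h₂₂ heq
      funext i k
      have := congrFun heq k
      have := congrArg (fun e : Equiv.Perm (Fin n) => e i) this
      simpa using this
    · intro σ _ hσ
      refine ⟨fun i k => σ k i, Finset.mem_univ _, hσ, ?_⟩
      funext k
      exact Equiv.ext fun i => rfl
    · intro g h₁ h₂
      rfl
  rw [step4]
  -- Step 5: evaluate each permutation term
  have hiota : ExteriorAlgebra.ιMulti F n (fun i => (Pi.single i 1 : Fin n → F))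
      = xiFull F n := by
    rw [ExteriorAlgebra.ιMulti_apply, xiFull, ← List.ofFn_eq_map]
    rfl
  have hsmul : ∀ (u : ℤˣ) (x : ExteriorAlgebra F (Fin n → F)),
      u • x = ((u : ℤ) : F) • x := by
    intro u x
    rw [Units.smul_def, ← Int.cast_smul_eq_zsmul F]
  have step5 : ∀ σ : Fin q → Equiv.Perm (Fin n),
      T (fun i k => σ k i)
      = ((∏ k, ((Equiv.Perm.sign (σ k) : ℤ) : F)) *
          ∏ i, A (Fin.cons i fun k => σ k i)) •
          PiTensorProduct.tprod F (fun _ : Fin q => xiFull F n) := by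
    intro σ
    rw [hT]
    have hcomp : ∀ k : Fin q,
        ExteriorAlgebra.ιMulti F n (fun i => (Pi.single (σ k i) 1 : Fin n → F))
        = ((Equiv.Perm.sign (σ k) : ℤ) : F) •
            ExteriorAlgebra.ιMulti F n (fun i => (Pi.single i 1 : Fin n → F)) := by
      intro k
      have := (ExteriorAlgebra.ιMulti F n (M := Fin n → F)).map_perm
        (fun i => (Pi.single i 1 : Fin n → F)) (σ k)
      rw [hsmul] at this
      exact this
    simp only [hcomp, hiota]
    rw [MultilinearMap.map_smul_univ (PiTensorProduct.tprod F)
      (fun k => ((Equiv.Perm.sign (σ k) : ℤ) : F)) (fun _ => xiFull F n)]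
    rw [smul_smul, mul_comm]
  rw [Finset.sum_congr rfl (fun σ _ => step5 σ), ← Finset.sum_smul, hyperdet_eq_sum]
end
end

section
/- (Laplace expansion of hyperdeterminant) For an even positive integer m, an m-dimensional tensor A of size n, and any r-element subset I of [n], det^[m] A = ∑_{I^(1),…,I^(m-1) ∈ C([n],r)} a_{I,I^(1),…,I^(m-1)} · ã_{I,I^(1),…,I^(m-1)}, where a denotes the minor and ã the cofactor. -/
open scoped Classical
open Finset Equiv

noncomputable section

variable {F : Type*} [Field F] [CharZero F]

namespace HyperLaplace
variable {n r : ℕ}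



variable {F : Type*} [Field F] [CharZero F]



lemma compl_card (hrn : r ≤ n) {S : Finset (Fin n)} (hS : S.card = r) :
    Sᶜ.card = n - r := by rw [Finset.card_compl, hS, Fintype.card_fin]

/-- The equivalence `Fin r ⊕ Fin (n-r) ≃ Fin n` listing `S` then `Sᶜ` in order. -/
def eqv (hrn : r ≤ n) (S : Finset (Fin n)) (hS : S.card = r) : (Fin r ⊕ Fin (n - r)) ≃ Fin n :=
  Equiv.ofBijective
    (Sum.elim (S.orderEmbOfFin hS) (Sᶜ.orderEmbOfFin (compl_card hrn hS)))
    (by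
      rw [Fintype.bijective_iff_injective_and_card]
      constructor
      · rintro (i | i) (j | j) h <;> simp only [Sum.elim_inl, Sum.elim_inr] at h
        · exact congrArg Sum.inl ((S.orderEmbOfFin hS).injective h)
        · exfalso
          have h1 := S.orderEmbOfFin_mem hS i
          have h2 := Sᶜ.orderEmbOfFin_mem (compl_card hrn hS) j
          rw [← h, Finset.mem_compl] at h2; exact h2 h1
        · exfalso
          have h1 := S.orderEmbOfFin_mem hS j
          have h2 := Sᶜ.orderEmbOfFin_mem (compl_card hrn hS) i
          rw [h, Finset.mem_compl] at h2; exact h2 h1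
        · exact congrArg Sum.inr ((Sᶜ.orderEmbOfFin _).injective h)
      · simp only [Fintype.card_sum, Fintype.card_fin]; omega)

@[simp] lemma eqv_inl (hrn : r ≤ n) (S : Finset (Fin n)) (hS : S.card = r) (i : Fin r) :
    eqv hrn S hS (Sum.inl i) = S.orderEmbOfFin hS i := rfl

@[simp] lemma eqv_inr (hrn : r ≤ n) (S : Finset (Fin n)) (hS : S.card = r) (i : Fin (n - r)) :
    eqv hrn S hS (Sum.inr i) = Sᶜ.orderEmbOfFin (compl_card hrn hS) i := rfl

lemma exists_eqv_inl (hrn : r ≤ n) {S : Finset (Fin n)} (hS : S.card = r) {x : Fin n}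
    (hx : x ∈ S) : ∃ i, eqv hrn S hS (Sum.inl i) = x := by
  have : x ∈ Set.range (S.orderEmbOfFin hS) := by rw [Finset.range_orderEmbOfFin]; exact hx
  obtain ⟨i, hi⟩ := this
  exact ⟨i, hi⟩

/-- The permutation comparing the orderings given by two `r`-subsets. -/
def pi (hrn : r ≤ n) (S T : Finset (Fin n)) (hS : S.card = r) (hT : T.card = r) :
    Equiv.Perm (Fin n) :=
  (eqv hrn T hT).symm.trans (eqv hrn S hS)


/-- Swapping adjacent elements `a < b = a+1` (with `b ∈ s`, `a ∉ s`) relates the order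
embeddings of `s` and `insert a (s.erase b)`. -/
lemma swap_orderEmbOfFin {k : ℕ} {s t : Finset (Fin n)} {a b : Fin n}
    (hab : a.1 + 1 = b.1) (hbs : b ∈ s) (has : a ∉ s)
    (ht : t = insert a (s.erase b)) (hs : s.card = k) (ht' : t.card = k) (i : Fin k) :
    Equiv.swap a b (t.orderEmbOfFin ht' i) = s.orderEmbOfFin hs i := by
  have hne : a ≠ b := by intro h; rw [h] at hab; omega
  have hat : a ∈ t := by rw [ht]; exact Finset.mem_insert_self _ _
  have hbt : b ∉ t := by
    rw [ht, Finset.mem_insert]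
    rintro (h | h)
    · exact hne h.symm
    · exact (Finset.notMem_erase _ _) h
  have key : ∀ x ∈ t, Equiv.swap a b x ∈ s := by
    intro x hx
    by_cases hxa : x = a
    · rw [hxa, Equiv.swap_apply_left]; exact hbs
    · have hxb : x ≠ b := fun h => hbt (h ▸ hx)
      rw [Equiv.swap_apply_of_ne_of_ne hxa hxb]
      rw [ht, Finset.mem_insert] at hx
      rcases hx with h | h
      · exact absurd h hxa
      · exact Finset.mem_of_mem_erase h
  have hmono : StrictMono (fun i => Equiv.swap a b (t.orderEmbOfFin ht' i)) := by
    intro i j hij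
    have hlt : t.orderEmbOfFin ht' i < t.orderEmbOfFin ht' j :=
      (t.orderEmbOfFin ht').strictMono hij
    set x := t.orderEmbOfFin ht' i with hx
    set y := t.orderEmbOfFin ht' j with hy
    have hxt : x ∈ t := t.orderEmbOfFin_mem ht' i
    have hyt : y ∈ t := t.orderEmbOfFin_mem ht' j
    have hxb : x ≠ b := fun h => hbt (h ▸ hxt)
    have hyb : y ≠ b := fun h => hbt (h ▸ hyt)
    show Equiv.swap a b x < Equiv.swap a b y
    by_cases hxa : x = a
    · -- swap x = b, y > x = a, y ≠ a, y ≠ b so y fixed and y > a, y ≠ b ⟹ y > b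
      rw [hxa, Equiv.swap_apply_left]
      have hya : y ≠ a := by intro h; rw [hxa, h] at hlt; exact lt_irrefl a hlt
      rw [Equiv.swap_apply_of_ne_of_ne hya hyb]
      have : a < y := hxa ▸ hlt
      have : a.1 < y.1 := this
      have : b.1 ≤ y.1 := by omega
      rcases lt_or_eq_of_le this with h | h
      · exact h
      · exact absurd (Fin.ext h.symm) hyb
    · by_cases hya : y = a
      · -- x < y = a, swap y = b, swap x = x < a < b
        rw [hya, Equiv.swap_apply_left, Equiv.swap_apply_of_ne_of_ne hxa hxb]
        have : x.1 < a.1 := hya ▸ hlt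
        have : x.1 < b.1 := by omega
        exact this
      · rw [Equiv.swap_apply_of_ne_of_ne hxa hxb, Equiv.swap_apply_of_ne_of_ne hya hyb]
        exact hlt
  have := Finset.orderEmbOfFin_unique hs
    (f := fun i => Equiv.swap a b (t.orderEmbOfFin ht' i))
    (fun i => key _ (t.orderEmbOfFin_mem ht' i)) hmono
  exact congrFun this i


lemma nat_downward {T : Finset ℕ} (h : ∀ j ∈ T, j = 0 ∨ j - 1 ∈ T) :
    ∀ j ∈ T, ∀ i, i ≤ j → i ∈ T := by
  intro j
  induction j with
  | zero =>
    intro hj i hi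
    have hi0 : i = 0 := by omega
    exact hi0 ▸ hj
  | succ k ihk =>
    intro hj i hi
    rcases h _ hj with h0 | hpred
    · omega
    · have hk : k ∈ T := by simpa using hpred
      rcases Nat.lt_succ_iff_lt_or_eq.mp (Nat.lt_succ_of_le hi) with h' | h'
      · exact ihk hk i (by omega)
      · exact h' ▸ hj


/-- the base subset `{0,…,r-1}` of `Fin n` -/
def base (hrn : r ≤ n) : Finset (Fin n) :=
  (Finset.univ : Finset (Fin r)).map (Fin.castLEEmb hrn)

lemma card_base (hrn : r ≤ n) : (base hrn).card = r := by
  simp [base]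

lemma mem_base (hrn : r ≤ n) {x : Fin n} : x ∈ base hrn ↔ x.1 < r := by
  constructor
  · rintro hx
    simp only [base, Finset.mem_map, Finset.mem_univ, true_and] at hx
    obtain ⟨i, rfl⟩ := hx
    exact i.2
  · intro hx
    simp only [base, Finset.mem_map, Finset.mem_univ, true_and]
    exact ⟨⟨x.1, hx⟩, rfl⟩

lemma exists_gap {S : Finset (Fin n)} (hS : S.card = r) (hrn : r ≤ n)
    (hSB : S ≠ base hrn) :
    ∃ a : Fin n, a ∈ S ∧ 0 < a.1 ∧ ∀ (h : a.1 - 1 < n), (⟨a.1 - 1, h⟩ : Fin n) ∉ S := by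
  by_contra hgap
  push_neg at hgap
  -- all elements of S are 0 or have predecessor in S; so S is downward closed
  set T : Finset ℕ := S.image Fin.val with hT
  have hdc : ∀ j ∈ T, j = 0 ∨ j - 1 ∈ T := by
    intro j hj
    simp only [hT, Finset.mem_image] at hj
    obtain ⟨x, hxS, rfl⟩ := hj
    by_cases hx0 : x.1 = 0
    · exact Or.inl hx0
    · right
      have hlt : x.1 - 1 < n := by omega
      obtain ⟨h1, h2⟩ := hgap x hxS (by omega)
      exact Finset.mem_image.2 ⟨⟨x.1 - 1, h1⟩, h2, rfl⟩
  have hdown := nat_downward hdc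
  -- there is an element of S with value ≥ r
  have hbig : ∃ a ∈ S, r ≤ a.1 := by
    by_contra hsmall
    push_neg at hsmall
    apply hSB
    apply Finset.eq_of_subset_of_card_le
    · intro x hx; exact (mem_base hrn).2 (hsmall x hx)
    · rw [card_base hrn, hS]
  obtain ⟨a, haS, har⟩ := hbig
  have haT : a.1 ∈ T := Finset.mem_image.2 ⟨a, haS, rfl⟩
  have hsub : Finset.range (a.1 + 1) ⊆ T := by
    intro i hi
    exact hdown _ haT i (by simpa using Nat.lt_succ_iff.mp (Finset.mem_range.mp hi))
  have hcard : a.1 + 1 ≤ T.card := by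
    simpa using Finset.card_le_card hsub
  have hTcard : T.card = r := by
    rw [hT, Finset.card_image_of_injective _ Fin.val_injective, hS]
  omega

lemma sign_pi_base (hrn : r ≤ n) :
    ∀ (N : ℕ) (S : Finset (Fin n)) (hS : S.card = r), (∑ i ∈ S, i.1) = N →
      Equiv.Perm.sign (pi hrn S (base hrn) hS (card_base hrn))
        = (-1) ^ (∑ i ∈ S, i.1 + ∑ i ∈ base hrn, i.1) := by
  intro N
  induction N using Nat.strong_induction_on with
  | _ N ih =>
    intro S hS hsum
    by_cases hSB : S = base hrn
    · subst hSB
      have h1 : pi hrn (base hrn) (base hrn) hS (card_base hrn) = 1 := by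
        ext x
        simp only [pi, Equiv.trans_apply, Equiv.Perm.coe_one, id_eq]
        exact congrArg Fin.val (Equiv.apply_symm_apply (eqv hrn (base hrn) hS) x)
      rw [h1, Equiv.Perm.sign_one]
      exact (Even.neg_one_pow ⟨∑ i ∈ base hrn, i.1, rfl⟩).symm
    · obtain ⟨a, haS, ha0, hpred⟩ := exists_gap hS hrn hSB
      have hlt : a.1 - 1 < n := by omega
      set a' : Fin n := ⟨a.1 - 1, hlt⟩ with ha'
      have ha'S : a' ∉ S := hpred hlt
      have hne : a' ≠ a := by
        intro h
        have := congrArg Fin.val h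
        simp only [ha'] at this
        omega
      have hab : a'.1 + 1 = a.1 := by simp [ha']; omega
      set S' : Finset (Fin n) := insert a' (S.erase a) with hS'def
      have ha'e : a' ∉ S.erase a := fun h => ha'S (Finset.mem_of_mem_erase h)
      have hS' : S'.card = r := by
        rw [hS'def, Finset.card_insert_of_notMem ha'e, Finset.card_erase_of_mem haS, hS]
        have : 0 < r := hS ▸ Finset.card_pos.2 ⟨a, haS⟩
        omega
      have hsum' : (∑ i ∈ S', i.1) + 1 = ∑ i ∈ S, i.1 := by
        rw [hS'def, Finset.sum_insert ha'e]
        have h2 : (∑ i ∈ S.erase a, i.1) + a.1 = ∑ i ∈ S, i.1 :=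
          Finset.sum_erase_add S _ haS
        simp only [ha']
        omega
      -- eqv S = (eqv S').trans (swap a' a)
      have h_eqv : ∀ x, eqv hrn S hS x = Equiv.swap a' a (eqv hrn S' hS' x) := by
        rintro (i | j)
        · rw [eqv_inl, eqv_inl]
          exact (swap_orderEmbOfFin hab haS ha'S hS'def hS hS' i).symm
        · rw [eqv_inr, eqv_inr]
          have haS' : a ∉ S' := by
            rw [hS'def, Finset.mem_insert]
            rintro (h | h)
            · exact hne h.symm
            · exact (Finset.notMem_erase _ _) h
          have hcompl : Sᶜ = insert a' (S'ᶜ.erase a) := by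
            ext x
            simp only [hS'def, Finset.mem_compl, Finset.mem_insert, Finset.mem_erase]
            by_cases hxa' : x = a' <;> by_cases hxa : x = a <;>
              simp [hxa', hxa, ha'S, haS, hne] <;> tauto
          have key := swap_orderEmbOfFin (s := S'ᶜ) (t := Sᶜ) (a := a') (b := a)
            hab (Finset.mem_compl.2 haS')
            (fun h => (Finset.mem_compl.mp h) (Finset.mem_insert_self _ _))
            hcompl (compl_card hrn hS') (compl_card hrn hS) j
          rw [← key, Equiv.swap_apply_self]
      have hpi : pi hrn S (base hrn) hS (card_base hrn)
          = Equiv.swap a' a * pi hrn S' (base hrn) hS' (card_base hrn) := by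
        ext x
        simp only [pi, Equiv.Perm.mul_apply, Equiv.trans_apply]
        rw [h_eqv]
      rw [hpi, map_mul, Equiv.Perm.sign_swap hne]
      have hN : (∑ i ∈ S', i.1) < N := by omega
      rw [ih _ hN S' hS' rfl]
      rw [← pow_succ']
      congr 1
      omega


lemma sign_pi (hrn : r ≤ n) (S T : Finset (Fin n)) (hS : S.card = r) (hT : T.card = r) :
    Equiv.Perm.sign (pi hrn S T hS hT)
      = (-1) ^ (∑ i ∈ S, i.1 + ∑ i ∈ T, i.1) := by
  have hmul : pi hrn S T hS hT
      = pi hrn S (base hrn) hS (card_base hrn)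
        * (pi hrn T (base hrn) hT (card_base hrn))⁻¹ := by
    ext x
    simp [pi, Equiv.Perm.mul_apply, Equiv.trans_apply, Equiv.Perm.inv_def]
  rw [hmul, map_mul, map_inv, sign_pi_base hrn _ S hS rfl, sign_pi_base hrn _ T hT rfl]
  generalize hA : (∑ i ∈ S, i.1) = A
  generalize hB : (∑ i ∈ T, i.1) = B
  generalize hC : (∑ i ∈ base hrn, i.1) = C
  rw [Int.units_inv_eq_self, ← pow_add]
  have : A + C + (B + C) = (A + B) + 2 * C := by ring
  rw [this, pow_add, pow_mul]
  norm_num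

lemma sum_perm_decomp {α β : Type*} [Fintype α] [Fintype β]
    (f : (α ⊕ β) ≃ (α ⊕ β)) (h : ∀ a : α, ∃ a', f (Sum.inl a) = Sum.inl a') :
    ∃ (τ : Equiv.Perm α) (ρ : Equiv.Perm β), f = Equiv.sumCongr τ ρ := by
  classical
  choose g hg using h
  have hginj : Function.Injective g := by
    intro a b hab
    have h1 : f (Sum.inl a) = f (Sum.inl b) := by rw [hg a, hg b, hab]
    exact Sum.inl_injective (f.injective h1)
  have hgbij : Function.Bijective g := Finite.injective_iff_bijective.mp hginj
  have hr : ∀ b : β, ∃ b', f (Sum.inr b) = Sum.inr b' := by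
    intro b
    cases hsum : f (Sum.inr b) with
    | inl a =>
      exfalso
      obtain ⟨a0, ha0⟩ := hgbij.2 a
      have : f (Sum.inl a0) = f (Sum.inr b) := by rw [hg a0, ha0, hsum]
      exact Sum.inl_ne_inr (f.injective this)
    | inr b' => exact ⟨b', rfl⟩
  choose g2 hg2 using hr
  have hg2inj : Function.Injective g2 := by
    intro a b hab
    have h1 : f (Sum.inr a) = f (Sum.inr b) := by rw [hg2 a, hg2 b, hab]
    exact Sum.inr_injective (f.injective h1)
  refine ⟨Equiv.ofBijective g hgbij,
    Equiv.ofBijective g2 (Finite.injective_iff_bijective.mp hg2inj), ?_⟩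
  ext x
  cases x with
  | inl a => simpa using hg a
  | inr b => simpa using hg2 b

lemma eqv_congr (hrn : r ≤ n) {S T : Finset (Fin n)} (h : S = T)
    (hS : S.card = r) (hT : T.card = r) : eqv hrn S hS = eqv hrn T hT := by
  subst h; rfl

lemma neg_one_pow_congr {a b : ℕ} (h : a % 2 = b % 2) : ((-1 : F)) ^ a = (-1) ^ b := by
  rcases Nat.even_or_odd a with ha | ha
  · have hb : Even b := by
      rcases ha with ⟨t, ht⟩; exact (Nat.even_iff).2 (by omega)
    rw [ha.neg_one_pow, hb.neg_one_pow]
  · have hb : Odd b := by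
      rcases ha with ⟨t, ht⟩; exact (Nat.odd_iff).2 (by omega)
    rw [ha.neg_one_pow, hb.neg_one_pow]

lemma key {m : ℕ} (hm : Even m) (hm0 : 0 < m) (hrn : r ≤ n)
    (A : (Fin m → Fin n) → F) (I : Finset (Fin n)) (hI : I.card = r)
    (J : Fin m → Finset (Fin n)) (hJ : (∀ k, (J k).card = r) ∧ J ⟨0, hm0⟩ = I) :
    (∑ σ : Fin m → Equiv.Perm (Fin n),
       if ((∀ k : Fin m, k.1 = 0 → σ k = 1) ∧ ∀ k, I.image (σ k) = J k) then
         (∏ k, ((Equiv.Perm.sign (σ k) : ℤ) : F)) * ∏ i, A fun k => σ k i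
       else 0)
    = hyperdet m r (fun a => A fun k => (J k).orderEmbOfFin (hJ.1 k) (a k)) *
        ((-1 : F) ^ (∑ k, ∑ i ∈ J k, (i.1 + 1)) *
          hyperdet m (n - r) (fun a => A fun k =>
            ((J k)ᶜ).orderEmbOfFin
              (by rw [Finset.card_compl, hJ.1 k, Fintype.card_fin]) (a k))) := by
  classical
  set eI := eqv hrn I hI with heI
  have heJc : ∀ k, ((J k)ᶜ).card = n - r := fun k => compl_card hrn (hJ.1 k)
  set eJ : Fin m → (Fin r ⊕ Fin (n - r)) ≃ Fin n := fun k => eqv hrn (J k) (hJ.1 k) with heJ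
  set φ : Fin m → Equiv.Perm (Fin r) → Equiv.Perm (Fin (n - r)) → Equiv.Perm (Fin n) :=
    fun k τ ρ => eI.symm.trans ((Equiv.sumCongr τ ρ).trans (eJ k)) with hφ
  set g : ((Fin m → Equiv.Perm (Fin r)) × (Fin m → Equiv.Perm (Fin (n - r))))
      → (Fin m → Equiv.Perm (Fin n)) := fun p k => φ k (p.1 k) (p.2 k) with hg
  have hφ_inl : ∀ (k τ ρ) (a : Fin r),
      φ k τ ρ (eI (Sum.inl a)) = eJ k (Sum.inl (τ a)) := by
    intro k τ ρ a
    simp [hφ, Equiv.sumCongr_apply]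
  have hφ_inr : ∀ (k τ ρ) (b : Fin (n - r)),
      φ k τ ρ (eI (Sum.inr b)) = eJ k (Sum.inr (ρ b)) := by
    intro k τ ρ b
    simp [hφ, Equiv.sumCongr_apply]
  -- injectivity of g
  have hginj : Function.Injective g := by
    intro p q hpq
    have hk : ∀ k, φ k (p.1 k) (p.2 k) = φ k (q.1 k) (q.2 k) := fun k => congrFun hpq k
    have h1 : ∀ k, p.1 k = q.1 k := by
      intro k; ext a
      have := congrArg (fun (σ : Equiv.Perm (Fin n)) => σ (eI (Sum.inl a))) (hk k)
      simp only [hφ_inl] at this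
      exact congrArg Fin.val (Sum.inl_injective ((eJ k).injective this))
    have h2 : ∀ k, p.2 k = q.2 k := by
      intro k; ext b
      have := congrArg (fun (σ : Equiv.Perm (Fin n)) => σ (eI (Sum.inr b))) (hk k)
      simp only [hφ_inr] at this
      exact congrArg Fin.val (Sum.inr_injective ((eJ k).injective this))
    exact Prod.ext (funext h1) (funext h2)
  -- image property
  have himg : ∀ p k, I.image (g p k) = J k := by
    intro p k
    apply Finset.eq_of_subset_of_card_le
    · intro x hx
      obtain ⟨y, hyI, rfl⟩ := Finset.mem_image.mp hx
      obtain ⟨i, rfl⟩ := exists_eqv_inl hrn hI hyI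
      rw [hg]
      simp only []
      rw [hφ_inl]
      exact (J k).orderEmbOfFin_mem (hJ.1 k) _
    · rw [Finset.card_image_of_injective _ (g p k).injective, hI, hJ.1 k]
  -- surjectivity
  have hsurj : ∀ σ : Fin m → Equiv.Perm (Fin n),
      (∀ k, I.image (σ k) = J k) → ∃ p, g p = σ := by
    intro σ hσ
    have hex : ∀ k, ∃ τ ρ, σ k = φ k τ ρ := by
      intro k
      set f : (Fin r ⊕ Fin (n - r)) ≃ (Fin r ⊕ Fin (n - r)) :=
        eI.trans ((σ k).trans (eJ k).symm) with hf
      have hleft : ∀ a : Fin r, ∃ a', f (Sum.inl a) = Sum.inl a' := by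
        intro a
        have hmem : σ k (eI (Sum.inl a)) ∈ J k := by
          rw [← hσ k]
          exact Finset.mem_image_of_mem _ (by
            rw [heI, eqv_inl]; exact I.orderEmbOfFin_mem hI a)
        obtain ⟨i, hi⟩ := exists_eqv_inl hrn (hJ.1 k) hmem
        refine ⟨i, ?_⟩
        simp only [hf, Equiv.trans_apply]
        rw [← hi, Equiv.symm_apply_apply]
      obtain ⟨τ, ρ, hτρ⟩ := sum_perm_decomp f hleft
      refine ⟨τ, ρ, ?_⟩
      ext x
      have : f ((eI).symm x) = (Equiv.sumCongr τ ρ) ((eI).symm x) := by rw [hτρ]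
      simp only [hf, Equiv.trans_apply, Equiv.apply_symm_apply] at this
      simp only [hφ, Equiv.trans_apply]
      rw [← this, Equiv.apply_symm_apply]
    choose τ ρ hτρ using hex
    exact ⟨(τ, ρ), funext fun k => (hτρ k).symm⟩
  -- sign
  have hsign : ∀ (k τ ρ), Equiv.Perm.sign (φ k τ ρ)
      = (-1) ^ (∑ i ∈ J k, i.1 + ∑ i ∈ I, i.1)
        * Equiv.Perm.sign τ * Equiv.Perm.sign ρ := by
    intro k τ ρ
    have hdecomp : φ k τ ρ
        = (pi hrn (J k) I (hJ.1 k) hI) * (eI.permCongr (Equiv.sumCongr τ ρ)) := by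
      ext x
      simp [hφ, pi, Equiv.permCongr_apply, Equiv.Perm.mul_apply, heI, heJ]
    rw [hdecomp, map_mul, sign_pi hrn (J k) I (hJ.1 k) hI,
      Equiv.Perm.sign_permCongr, Equiv.Perm.sign_sumCongr, mul_assoc]
  -- condition
  have hk0 : ∀ (k : Fin m), k.1 = 0 → k = ⟨0, hm0⟩ := fun k hk => Fin.ext hk
  have hcond : ∀ p, (∀ k : Fin m, k.1 = 0 → g p k = 1)
      ↔ ((∀ k : Fin m, k.1 = 0 → p.1 k = 1) ∧ (∀ k : Fin m, k.1 = 0 → p.2 k = 1)) := by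
    intro p
    have heq : eJ ⟨0, hm0⟩ = eI := by
      rw [heJ, heI]; exact eqv_congr hrn hJ.2 _ _
    have hφ0 : ∀ τ ρ, (φ ⟨0, hm0⟩ τ ρ = 1) ↔ (τ = 1 ∧ ρ = 1) := by
      intro τ ρ
      constructor
      · intro h
        have happ : ∀ x, φ ⟨0, hm0⟩ τ ρ x = x := fun x => by rw [h]; rfl
        constructor
        · ext a
          have := happ (eI (Sum.inl a))
          rw [hφ_inl, heq] at this
          exact congrArg Fin.val (Sum.inl_injective (eI.injective this))
        · ext b
          have := happ (eI (Sum.inr b))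
          rw [hφ_inr, heq] at this
          exact congrArg Fin.val (Sum.inr_injective (eI.injective this))
      · rintro ⟨rfl, rfl⟩
        ext x
        simp [hφ, heq, Equiv.sumCongr_apply]
    constructor
    · intro h
      refine ⟨fun k hk => ?_, fun k hk => ?_⟩
      · have hk' := hk0 k hk; subst hk'
        exact ((hφ0 _ _).mp (h _ hk)).1
      · have hk' := hk0 k hk; subst hk'
        exact ((hφ0 _ _).mp (h _ hk)).2
    · rintro ⟨h1, h2⟩ k hk
      have hk' := hk0 k hk; subst hk'
      exact (hφ0 _ _).mpr ⟨h1 _ rfl, h2 _ rfl⟩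
  -- cast of sign decomposition
  have hsgnF : ∀ (k τ ρ), ((Equiv.Perm.sign (φ k τ ρ) : ℤ) : F)
      = (-1 : F) ^ (∑ i ∈ J k, i.1 + ∑ i ∈ I, i.1)
        * ((Equiv.Perm.sign τ : ℤ) : F) * ((Equiv.Perm.sign ρ : ℤ) : F) := by
    intro k τ ρ
    rw [hsign k τ ρ]
    push_cast
    ring
  have hC : (∏ k : Fin m, (-1 : F) ^ (∑ i ∈ J k, i.1 + ∑ i ∈ I, i.1))
      = (-1 : F) ^ (∑ k : Fin m, ∑ i ∈ J k, (i.1 + 1)) := by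
    rw [Finset.prod_pow_eq_pow_sum]
    apply neg_one_pow_congr
    obtain ⟨t, ht⟩ := hm
    have e1 : ∑ k : Fin m, (∑ i ∈ J k, i.1 + ∑ i ∈ I, i.1)
        = (∑ k : Fin m, ∑ i ∈ J k, i.1) + 2 * (t * ∑ i ∈ I, i.1) := by
      rw [Finset.sum_add_distrib, Finset.sum_const, Finset.card_univ, Fintype.card_fin,
        smul_eq_mul]
      have hmul : m * (∑ i ∈ I, i.1) = 2 * (t * ∑ i ∈ I, i.1) := by rw [ht]; ring
      omega
    have e2 : ∑ k : Fin m, ∑ i ∈ J k, (i.1 + 1)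
        = (∑ k : Fin m, ∑ i ∈ J k, i.1) + 2 * (t * r) := by
      have hpt : ∀ k : Fin m, ∑ i ∈ J k, (i.1 + 1) = (∑ i ∈ J k, i.1) + r := by
        intro k
        rw [Finset.sum_add_distrib, Finset.sum_const, smul_eq_mul, mul_one, hJ.1 k]
      rw [Finset.sum_congr rfl (fun k _ => hpt k), Finset.sum_add_distrib, Finset.sum_const,
        Finset.card_univ, Fintype.card_fin, smul_eq_mul]
      have hmul : m * r = 2 * (t * r) := by rw [ht]; ring
      omega
    omega
  have hprodsgn : ∀ p : ((Fin m → Equiv.Perm (Fin r)) × (Fin m → Equiv.Perm (Fin (n - r)))),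
      (∏ k, ((Equiv.Perm.sign (g p k) : ℤ) : F))
      = (-1 : F) ^ (∑ k : Fin m, ∑ i ∈ J k, (i.1 + 1))
        * (∏ k, ((Equiv.Perm.sign (p.1 k) : ℤ) : F))
        * (∏ k, ((Equiv.Perm.sign (p.2 k) : ℤ) : F)) := by
    intro p
    have : ∀ k : Fin m, ((Equiv.Perm.sign (g p k) : ℤ) : F)
        = (-1 : F) ^ (∑ i ∈ J k, i.1 + ∑ i ∈ I, i.1)
          * ((Equiv.Perm.sign (p.1 k) : ℤ) : F) * ((Equiv.Perm.sign (p.2 k) : ℤ) : F) :=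
      fun k => hsgnF k (p.1 k) (p.2 k)
    rw [Finset.prod_congr rfl (fun k _ => this k), Finset.prod_mul_distrib,
      Finset.prod_mul_distrib, hC]
  have hprodA : ∀ p : ((Fin m → Equiv.Perm (Fin r)) × (Fin m → Equiv.Perm (Fin (n - r)))),
      (∏ i, A fun k => g p k i)
      = (∏ a : Fin r, A fun k => (J k).orderEmbOfFin (hJ.1 k) (p.1 k a))
        * ∏ b : Fin (n - r), A fun k => ((J k)ᶜ).orderEmbOfFin (heJc k) (p.2 k b) := by
    intro p
    rw [← Equiv.prod_comp eI (fun i => A fun k => g p k i), Fintype.prod_sum_type]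
    congr 1
    · refine Finset.prod_congr rfl fun a _ => ?_
      exact congrArg A (funext fun k => hφ_inl k (p.1 k) (p.2 k) a)
    · refine Finset.prod_congr rfl fun b _ => ?_
      exact congrArg A (funext fun k => hφ_inr k (p.1 k) (p.2 k) b)
  -- transfer the sum over σ to a sum over pairs
  have stepA : (∑ σ : Fin m → Equiv.Perm (Fin n),
      if ((∀ k : Fin m, k.1 = 0 → σ k = 1) ∧ ∀ k, I.image (σ k) = J k) then
        (∏ k, ((Equiv.Perm.sign (σ k) : ℤ) : F)) * ∏ i, A fun k => σ k i
      else 0)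
      = ∑ p : ((Fin m → Equiv.Perm (Fin r)) × (Fin m → Equiv.Perm (Fin (n - r)))),
        (if ((∀ k : Fin m, k.1 = 0 → g p k = 1) ∧ ∀ k, I.image (g p k) = J k) then
          (∏ k, ((Equiv.Perm.sign (g p k) : ℤ) : F)) * ∏ i, A fun k => g p k i
        else 0) := by
    refine (Finset.sum_of_injOn g (hginj.injOn)
      (fun p _ => Finset.mem_univ _) ?_ (fun p _ => rfl)).symm
    intro σ _ hσ
    rw [if_neg]
    rintro ⟨h1, h2⟩
    obtain ⟨p, rfl⟩ := hsurj σ h2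
    exact hσ (Set.mem_image_of_mem g (by simp))
  rw [stepA]
  have stepB : ∀ p : ((Fin m → Equiv.Perm (Fin r)) × (Fin m → Equiv.Perm (Fin (n - r)))),
      (if ((∀ k : Fin m, k.1 = 0 → g p k = 1) ∧ ∀ k, I.image (g p k) = J k) then
        (∏ k, ((Equiv.Perm.sign (g p k) : ℤ) : F)) * ∏ i, A fun k => g p k i
      else 0)
      = (if (∀ k : Fin m, k.1 = 0 → p.1 k = 1) then
          (∏ k, ((Equiv.Perm.sign (p.1 k) : ℤ) : F))
            * ∏ a : Fin r, A fun k => (J k).orderEmbOfFin (hJ.1 k) (p.1 k a)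
        else 0)
        * ((-1 : F) ^ (∑ k : Fin m, ∑ i ∈ J k, (i.1 + 1))
          * (if (∀ k : Fin m, k.1 = 0 → p.2 k = 1) then
              (∏ k, ((Equiv.Perm.sign (p.2 k) : ℤ) : F))
                * ∏ b : Fin (n - r), A fun k => ((J k)ᶜ).orderEmbOfFin (heJc k) (p.2 k b)
            else 0)) := by
    intro p
    have hcnd : ((∀ k : Fin m, k.1 = 0 → g p k = 1) ∧ ∀ k, I.image (g p k) = J k)
        ↔ ((∀ k : Fin m, k.1 = 0 → p.1 k = 1) ∧ (∀ k : Fin m, k.1 = 0 → p.2 k = 1)) := by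
      rw [and_iff_left (himg p), hcond p]
    by_cases h1 : (∀ k : Fin m, k.1 = 0 → p.1 k = 1)
    · by_cases h2 : (∀ k : Fin m, k.1 = 0 → p.2 k = 1)
      · rw [if_pos (hcnd.mpr ⟨h1, h2⟩), if_pos h1, if_pos h2, hprodsgn p, hprodA p]
        ring
      · rw [if_neg (fun hc => h2 (hcnd.mp hc).2), if_neg h2]
        ring
    · rw [if_neg (fun hc => h1 (hcnd.mp hc).1), if_neg h1]
      ring
  rw [Finset.sum_congr rfl (fun p _ => stepB p)]
  rw [Fintype.sum_prod_type]
  simp only [← Finset.mul_sum]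
  rw [← Finset.sum_mul]
  rfl


end HyperLaplace


/-- Laplace expansion of the hyperdeterminant along the rows indexed by `I`. -/
theorem hyperdet_laplace (m n r : ℕ) (hm : Even m) (hm0 : 0 < m) (hrn : r ≤ n)
    (A : (Fin m → Fin n) → F) (I : Finset (Fin n)) (hI : I.card = r) :
    hyperdet m n A
    = ∑ J : Fin m → Finset (Fin n),
        if h : (∀ k, (J k).card = r) ∧ J ⟨0, hm0⟩ = I then
          hyperdet m r (fun a => A fun k => (J k).orderEmbOfFin (h.1 k) (a k)) *
            ((-1 : F) ^ (∑ k, ∑ i ∈ J k, (i.1 + 1)) *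
              hyperdet m (n - r) (fun a => A fun k =>
                ((J k)ᶜ).orderEmbOfFin
                  (by rw [Finset.card_compl, h.1 k, Fintype.card_fin]) (a k)))
        else 0 := by
  classical
  have step1 : hyperdet m n A
      = ∑ J : Fin m → Finset (Fin n), ∑ σ : Fin m → Equiv.Perm (Fin n),
          if ((∀ k : Fin m, k.1 = 0 → σ k = 1) ∧ ∀ k, I.image (σ k) = J k) then
            (∏ k, ((Equiv.Perm.sign (σ k) : ℤ) : F)) * ∏ i, A fun k => σ k i
          else 0 := by
    rw [hyperdet, Finset.sum_comm]
    apply Finset.sum_congr rfl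
    intro σ _
    have hrw : ∀ J : Fin m → Finset (Fin n),
        (if ((∀ k : Fin m, k.1 = 0 → σ k = 1) ∧ ∀ k, I.image (σ k) = J k) then
          (∏ k, ((Equiv.Perm.sign (σ k) : ℤ) : F)) * ∏ i, A fun k => σ k i
        else 0)
        = (if J = (fun k => I.image (σ k)) then
            (if (∀ k : Fin m, k.1 = 0 → σ k = 1) then
              (∏ k, ((Equiv.Perm.sign (σ k) : ℤ) : F)) * ∏ i, A fun k => σ k i
            else 0)
          else 0) := by
      intro J
      by_cases hJ : J = fun k => I.image (σ k)
      · subst hJ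
        rw [if_pos rfl,
          if_congr (and_iff_left (fun k : Fin m => rfl)) rfl rfl]
      · rw [if_neg hJ, if_neg]
        rintro ⟨h1, h2⟩
        exact hJ (funext fun k => (h2 k).symm)
    rw [Finset.sum_congr rfl (fun J _ => hrw J), Finset.sum_ite_eq' Finset.univ]
    simp
  rw [step1]
  apply Finset.sum_congr rfl
  intro J _
  by_cases hJ : (∀ k, (J k).card = r) ∧ J ⟨0, hm0⟩ = I
  · rw [dif_pos hJ]
    exact HyperLaplace.key hm hm0 hrn A I hI J hJ
  · rw [dif_neg hJ]
    apply Finset.sum_eq_zero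
    intro σ _
    rw [if_neg]
    rintro ⟨h1, h2⟩
    apply hJ
    constructor
    · intro k
      rw [← h2 k, Finset.card_image_of_injective _ (σ k).injective, hI]
    · rw [← h2 ⟨0, hm0⟩, h1 ⟨0, hm0⟩ rfl]
      simp
end
end

section
/- (Block Laplace expansion) Let m be even and l, n positive integers, and A an m-dimensional tensor of size ln. For any sequence I = (i₁,…,i_{ln}) ∈ [ln]^{ln} with l-block decomposition I = (I₁,…,I_n), one has det^[m] A_{[ln],…,[ln],I} = ∑_{σ^(1),…,σ^(m-1)} sgn(σ^(1))⋯sgn(σ^(m-1)) ∏_{j=1}^n det^[m] A_{σ^(1)_j,…,σ^(m-1)_j, I_j}, where each σ^(k) runs over permutations of [ln] whose n consecutive blocks of length l are each increasing, and σ^(k)_j denotes the j-th block of σ^(k). -/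
open scoped Classical
open Finset Equiv

noncomputable section

variable {F : Type*} [Field F] [CharZero F]

/-! ### Infrastructure -/

section Infra

variable {l n : ℕ}

/-- The equivalence `Fin n × Fin l ≃ Fin (l*n)` sending `(j,i)` to `blk l n j i`. -/
def eBlk (l n : ℕ) : Fin n × Fin l ≃ Fin (l * n) :=
  finProdFinEquiv.trans (finCongr (Nat.mul_comm n l))

lemma eBlk_apply (j : Fin n) (i : Fin l) : eBlk l n (j, i) = blk l n j i := by
  apply Fin.ext
  show ((i : ℕ) + l * j) = j * l + i
  ring

lemma blk_injective {j j' : Fin n} {i i' : Fin l} (h : blk l n j i = blk l n j' i') :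
    j = j' ∧ i = i' := by
  rw [← eBlk_apply, ← eBlk_apply] at h
  have := (eBlk l n).injective h
  exact ⟨congrArg Prod.fst this, congrArg Prod.snd this⟩

lemma blk_surj (x : Fin (l * n)) : ∃ j i, x = blk l n j i := by
  obtain ⟨⟨j, i⟩, rfl⟩ := (eBlk l n).surjective x
  exact ⟨j, i, (eBlk_apply j i).symm ▸ rfl⟩

lemma blk_strictMono (j : Fin n) : StrictMono (blk l n j) := by
  intro a b h
  rw [Fin.lt_def] at h ⊢
  show (j : ℕ) * l + a < j * l + b
  omega

lemma prod_blk {M : Type*} [CommMonoid M] (f : Fin (l * n) → M) :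
    ∏ x, f x = ∏ j : Fin n, ∏ i : Fin l, f (blk l n j i) := by
  rw [← Equiv.prod_comp (eBlk l n) f, Fintype.prod_prod_type]
  simp only [eBlk_apply]

/-- Block-preserving permutation built from a family of permutations of the blocks. -/
def Pblk (l n : ℕ) (r : Fin n → Equiv.Perm (Fin l)) : Equiv.Perm (Fin (l * n)) :=
  (eBlk l n).permCongr (Equiv.prodCongrRight r)

lemma Pblk_apply (r : Fin n → Equiv.Perm (Fin l)) (j : Fin n) (i : Fin l) :
    Pblk l n r (blk l n j i) = blk l n j (r j i) := by
  rw [← eBlk_apply, ← eBlk_apply]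
  simp [Pblk, Equiv.permCongr_apply]

lemma Pblk_one : Pblk l n 1 = 1 := by
  ext x
  obtain ⟨j, i, rfl⟩ := blk_surj x
  simp [Pblk_apply]

lemma Pblk_mul (r r' : Fin n → Equiv.Perm (Fin l)) :
    Pblk l n r * Pblk l n r' = Pblk l n (fun j => r j * r' j) := by
  ext x
  obtain ⟨j, i, rfl⟩ := blk_surj x
  simp [Pblk_apply, Equiv.Perm.mul_apply]

lemma Pblk_inv (r : Fin n → Equiv.Perm (Fin l)) :
    (Pblk l n r)⁻¹ = Pblk l n (fun j => (r j)⁻¹) := by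
  rw [eq_comm, eq_inv_iff_mul_eq_one, Pblk_mul]
  have : (fun j => (r j)⁻¹ * r j) = (1 : Fin n → Equiv.Perm (Fin l)) := by
    funext j; simp
  rw [this, Pblk_one]

lemma Pblk_injective : Function.Injective (Pblk l n) := by
  intro r r' h
  funext j
  ext i
  have := congrArg (fun p => p (blk l n j i)) h
  simp only [Pblk_apply] at this
  have := (blk_injective this).2
  exact congrArg Fin.val this

lemma sign_Pblk (r : Fin n → Equiv.Perm (Fin l)) :
    Equiv.Perm.sign (Pblk l n r) = ∏ j, Equiv.Perm.sign (r j) := by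
  rw [Pblk, Equiv.Perm.sign_permCongr, Equiv.Perm.sign_prodCongrRight]

end Infra
/-! ### Unique factorization into block-increasing times block-preserving -/

section Fac

variable {l n : ℕ}

lemma card_blkSet (π : Equiv.Perm (Fin (l * n))) (j : Fin n) : (blkSet l n π j).card = l := by
  rw [blkSet, Finset.card_image_of_injective]
  · simp
  · intro a b h
    exact (blk_injective (π.injective h)).2

lemma blkSet_disjoint (π : Equiv.Perm (Fin (l * n))) {j j' : Fin n} {x : Fin (l * n)}
    (hx : x ∈ blkSet l n π j) (hx' : x ∈ blkSet l n π j') : j = j' := by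
  simp only [blkSet, Finset.mem_image, Finset.mem_univ, true_and] at hx hx'
  obtain ⟨i, rfl⟩ := hx
  obtain ⟨i', h⟩ := hx'
  exact ((blk_injective (π.injective h)).1).symm

/-- The underlying function of the block-increasing part of `π`. -/
noncomputable def fstFacFun (π : Equiv.Perm (Fin (l * n))) : Fin n × Fin l → Fin (l * n) :=
  fun p => (blkSet l n π p.1).orderEmbOfFin (card_blkSet π p.1) p.2

lemma fstFacFun_mem (π : Equiv.Perm (Fin (l * n))) (p : Fin n × Fin l) :
    fstFacFun π p ∈ blkSet l n π p.1 :=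
  Finset.orderEmbOfFin_mem _ _ _

lemma fstFacFun_bij (π : Equiv.Perm (Fin (l * n))) : Function.Bijective (fstFacFun π) := by
  rw [Fintype.bijective_iff_injective_and_card]
  constructor
  · rintro ⟨j, i⟩ ⟨j', i'⟩ h
    have hj : j = j' := blkSet_disjoint π (h ▸ fstFacFun_mem π (j, i)) (fstFacFun_mem π (j', i'))
    subst hj
    have : i = i' := by
      have := h
      unfold fstFacFun at this
      exact (Finset.orderEmbOfFin ..).injective this
    rw [this]
  · simp [Nat.mul_comm]

/-- The block-increasing part of a permutation `π` of `[l*n]`. -/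
noncomputable def fstFac (π : Equiv.Perm (Fin (l * n))) : Equiv.Perm (Fin (l * n)) :=
  (eBlk l n).symm.trans (Equiv.ofBijective (fstFacFun π) (fstFacFun_bij π))

lemma fstFac_apply (π : Equiv.Perm (Fin (l * n))) (j : Fin n) (i : Fin l) :
    fstFac π (blk l n j i) = fstFacFun π (j, i) := by
  have h : fstFac π (blk l n j i)
      = Equiv.ofBijective (fstFacFun π) (fstFacFun_bij π) ((eBlk l n).symm (blk l n j i)) := rfl
  rw [h, ← eBlk_apply, Equiv.symm_apply_apply, Equiv.ofBijective_apply]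

lemma fstFac_mem (π : Equiv.Perm (Fin (l * n))) (j : Fin n) (i : Fin l) :
    fstFac π (blk l n j i) ∈ blkSet l n π j := by
  rw [fstFac_apply]; exact fstFacFun_mem π (j, i)

lemma blockInc_fstFac (π : Equiv.Perm (Fin (l * n))) : BlockInc l n (fstFac π) := by
  intro j a b h
  show fstFac π (blk l n j a) < fstFac π (blk l n j b)
  rw [fstFac_apply, fstFac_apply]
  exact ((blkSet l n π j).orderEmbOfFin (card_blkSet π j)).strictMono h

lemma blockInc_one : BlockInc l n 1 := by
  intro j a b h
  simpa using blk_strictMono j h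

/-- Block-increasing permutations are determined by their block images. -/
lemma blockInc_eq_fstFac (π σ : Equiv.Perm (Fin (l * n))) (hσ : BlockInc l n σ)
    (h : ∀ j, blkSet l n σ j = blkSet l n π j) : σ = fstFac π := by
  ext x
  obtain ⟨j, i, rfl⟩ := blk_surj x
  have key : (fun i => σ (blk l n j i)) =
      (blkSet l n π j).orderEmbOfFin (card_blkSet π j) := by
    apply Finset.orderEmbOfFin_unique
    · intro i
      rw [← h j]
      exact Finset.mem_image_of_mem _ (Finset.mem_univ i)
    · exact hσ j
  have := congrFun key i
  rw [this, fstFac_apply]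
  rfl

/-- The block-preserving part as a permutation of `Fin n × Fin l`. -/
noncomputable def facAux (π : Equiv.Perm (Fin (l * n))) : Equiv.Perm (Fin n × Fin l) :=
  (eBlk l n).permCongr.symm ((fstFac π)⁻¹ * π)

lemma facAux_fst (π : Equiv.Perm (Fin (l * n))) (j : Fin n) (i : Fin l) :
    (facAux π (j, i)).1 = j := by
  have h1 : π (blk l n j i) ∈ blkSet l n π j :=
    Finset.mem_image_of_mem _ (Finset.mem_univ i)
  -- the image of `fstFac π` on block j is `blkSet l n π j`
  obtain ⟨i', hi'⟩ : ∃ i', fstFac π (blk l n j i') = π (blk l n j i) := by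
    have := Finset.range_orderEmbOfFin (blkSet l n π j) (card_blkSet π j)
    have hmem : π (blk l n j i) ∈ Set.range ((blkSet l n π j).orderEmbOfFin (card_blkSet π j)) := by
      rw [this]; exact_mod_cast h1
    obtain ⟨i', hi'⟩ := hmem
    exact ⟨i', by rw [fstFac_apply]; exact_mod_cast hi'⟩
  have : facAux π (j, i) = (j, i') := by
    show (eBlk l n).symm ((fstFac π)⁻¹ (π (eBlk l n (j, i)))) = (j, i')
    rw [eBlk_apply, ← hi', Equiv.Perm.inv_def, Equiv.symm_apply_apply, ← eBlk_apply, Equiv.symm_apply_apply]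
  rw [this]

lemma eBlk_facAux (π : Equiv.Perm (Fin (l * n))) (p : Fin n × Fin l) :
    eBlk l n (facAux π p) = (fstFac π)⁻¹ (π (eBlk l n p)) := by
  show eBlk l n ((eBlk l n).symm _) = _
  rw [Equiv.apply_symm_apply]
  rfl

/-- The family of block permutations of `π` (the block-preserving part). -/
noncomputable def sndFac (π : Equiv.Perm (Fin (l * n))) (j : Fin n) : Equiv.Perm (Fin l) :=
  Equiv.ofBijective (fun i => (facAux π (j, i)).2)
    (by
      rw [Fintype.bijective_iff_injective_and_card]
      refine ⟨fun a b h => ?_, rfl⟩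
      have : facAux π (j, a) = facAux π (j, b) :=
        Prod.ext (by rw [facAux_fst, facAux_fst]) h
      exact (Prod.mk.injEq .. ▸ ((facAux π).injective this)).2)

lemma sndFac_spec (π : Equiv.Perm (Fin (l * n))) (j : Fin n) (i : Fin l) :
    blk l n j (sndFac π j i) = (fstFac π)⁻¹ (π (blk l n j i)) := by
  have h1 : facAux π (j, i) = (j, sndFac π j i) :=
    Prod.ext (facAux_fst π j i) rfl
  have := eBlk_facAux π (j, i)
  rw [h1, eBlk_apply, eBlk_apply] at this
  exact this

/-- Existence of the factorization. -/
lemma fac_eq (π : Equiv.Perm (Fin (l * n))) : π = fstFac π * Pblk l n (sndFac π) := by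
  apply Equiv.ext
  intro x
  obtain ⟨j, i, rfl⟩ := blk_surj x
  rw [Equiv.Perm.mul_apply, Pblk_apply, sndFac_spec, Equiv.Perm.inv_def, Equiv.apply_symm_apply]

/-- Uniqueness of the factorization. -/
lemma fac_unique (σ : Equiv.Perm (Fin (l * n))) (r : Fin n → Equiv.Perm (Fin l))
    (hσ : BlockInc l n σ) :
    fstFac (σ * Pblk l n r) = σ ∧ sndFac (σ * Pblk l n r) = r := by
  set π := σ * Pblk l n r with hπ
  have himg : ∀ j, blkSet l n σ j = blkSet l n π j := by
    intro j
    apply Finset.ext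
    intro x
    simp only [blkSet, Finset.mem_image, Finset.mem_univ, true_and]
    constructor
    · rintro ⟨i, rfl⟩
      exact ⟨(r j)⁻¹ i, by
        show σ (Pblk l n r (blk l n j ((r j)⁻¹ i))) = σ (blk l n j i)
        rw [Pblk_apply, Equiv.Perm.inv_def, Equiv.apply_symm_apply]⟩
    · rintro ⟨i, rfl⟩
      exact ⟨r j i, by
        show σ (blk l n j (r j i)) = σ (Pblk l n r (blk l n j i))
        rw [Pblk_apply]⟩
  have h1 : σ = fstFac π := blockInc_eq_fstFac π σ hσ himg
  refine ⟨h1.symm, ?_⟩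
  have h2 : Pblk l n (sndFac π) = Pblk l n r := by
    have := fac_eq π
    rw [← h1] at this
    rw [hπ] at this
    exact (mul_left_cancel this.symm)
  exact (Pblk_injective h2)

lemma fstFac_of_blockInc (σ : Equiv.Perm (Fin (l * n))) (hσ : BlockInc l n σ) :
    fstFac σ = σ ∧ sndFac σ = 1 := by
  have := fac_unique σ 1 hσ
  rwa [Pblk_one, mul_one] at this

lemma fstFac_of_Pblk (r : Fin n → Equiv.Perm (Fin l)) :
    fstFac (Pblk l n r) = 1 ∧ sndFac (Pblk l n r) = r := by
  have := fac_unique 1 r blockInc_one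
  rwa [one_mul] at this

end Fac
/-! ### Sign helpers -/

section Sgn

variable {α : Type*} [DecidableEq α] [Fintype α]

lemma sgnF_mul (p q : Equiv.Perm α) :
    ((Equiv.Perm.sign (p * q) : ℤ) : F) =
      ((Equiv.Perm.sign p : ℤ) : F) * ((Equiv.Perm.sign q : ℤ) : F) := by
  rw [map_mul]; push_cast [Units.val_mul]; ring

lemma sgnF_inv (p : Equiv.Perm α) :
    ((Equiv.Perm.sign p⁻¹ : ℤ) : F) = ((Equiv.Perm.sign p : ℤ) : F) := by
  rw [Equiv.Perm.sign_inv]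

lemma sgnF_even_pow {m : ℕ} (hm : Even m) (p : Equiv.Perm α) :
    (((Equiv.Perm.sign p : ℤ) : F)) ^ m = 1 := by
  rcases Int.units_eq_one_or (Equiv.Perm.sign p) with h | h <;> rw [h] <;> push_cast
  · exact one_pow m
  · exact hm.neg_one_pow

end Sgn

lemma prod_ite_all {ι : Type*} [Fintype ι] (p : ι → Prop) [DecidablePred p]
    [Decidable (∀ j, p j)] (f : ι → F) :
    (∏ j, (if p j then f j else 0)) = if (∀ j, p j) then ∏ j, f j else 0 := by
  by_cases h : ∀ j, p j
  · rw [if_pos h]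
    exact Finset.prod_congr rfl fun j _ => if_pos (h j)
  · rw [if_neg h]
    push_neg at h
    obtain ⟨j, hj⟩ := h
    exact Finset.prod_eq_zero (Finset.mem_univ j) (if_neg hj)

lemma cond0_iff {m : ℕ} {α : Type*} [One α] (hm0 : 0 < m) (g : Fin m → α) :
    (∀ k : Fin m, k.1 = 0 → g k = 1) ↔ g ⟨0, hm0⟩ = 1 := by
  constructor
  · intro h; exact h _ rfl
  · intro h k hk
    have : k = ⟨0, hm0⟩ := Fin.ext hk
    rwa [this]

/-! ### Step A: rotating the identity slot from `0` to `m-1` -/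

lemma stepA (m N : ℕ) (hm : Even m) (hm0 : 0 < m) (A : (Fin m → Fin N) → F)
    (I : Fin N → Fin N) :
    hyperdet m N (fun a => A fun k => if k = (⟨m - 1, by omega⟩ : Fin m) then I (a k) else a k)
    = ∑ ν : Fin m → Equiv.Perm (Fin N),
        if ν ⟨m - 1, by omega⟩ = 1 then
          (∏ k, ((Equiv.Perm.sign (ν k) : ℤ) : F)) *
            ∏ x, A (fun k => if k = (⟨m - 1, by omega⟩ : Fin m) then I x else ν k x)
        else 0 := by
  have hm2 : 2 ≤ m := by obtain ⟨t, rfl⟩ := hm; omega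
  set la : Fin m := ⟨m - 1, by omega⟩ with hla
  set fz : Fin m := ⟨0, hm0⟩ with hfz
  have hne : fz ≠ la := by
    simp only [hfz, hla, ne_eq, Fin.mk.injEq]
    omega
  rw [hyperdet]
  set E : (Fin m → Equiv.Perm (Fin N)) → (Fin m → Equiv.Perm (Fin N)) :=
    fun σ k => if k = la then σ fz else σ k * (σ la)⁻¹ with hE
  set E' : (Fin m → Equiv.Perm (Fin N)) → (Fin m → Equiv.Perm (Fin N)) :=
    fun ν k => if k = la then (ν fz)⁻¹ * ν la else ν k * ((ν fz)⁻¹ * ν la) with hE'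
  have hbij : Function.Bijective E := by
    apply Function.bijective_iff_has_inverse.2 ⟨E', ?_, ?_⟩
    · intro σ
      funext k
      by_cases hk : k = la
      · subst hk
        simp only [hE, hE', if_pos rfl, if_neg hne, eq_self_iff_true, if_true]
        group
      · simp only [hE, hE', if_neg hk, if_neg hne, eq_self_iff_true, if_true]
        group
    · intro ν
      funext k
      by_cases hk : k = la
      · subst hk
        simp only [hE, hE', if_pos rfl, if_neg hne, eq_self_iff_true, if_true]
        group
      · simp only [hE, hE', if_neg hk, if_neg hne, eq_self_iff_true, if_true]
        group
  apply Fintype.sum_bijective E hbij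
  intro σ
  by_cases h1 : σ fz = 1
  · have hc : ∀ k : Fin m, k.1 = 0 → σ k = 1 := (cond0_iff hm0 σ).2 h1
    have hEla : E σ la = 1 := by rw [hE]; simp [h1]
    rw [if_pos hc, if_pos hEla]
    have hEk : ∀ k, E σ k = σ k * (σ la)⁻¹ := by
      intro k
      by_cases hk : k = la
      · subst hk
        simp only [hE, if_pos rfl]
        rw [h1, mul_inv_cancel]
      · simp only [hE, if_neg hk]
    congr 1
    · -- signs
      rw [eq_comm]
      calc ∏ k, ((Equiv.Perm.sign (E σ k) : ℤ) : F)
          = ∏ k, (((Equiv.Perm.sign (σ k) : ℤ) : F) * ((Equiv.Perm.sign (σ la) : ℤ) : F)) :=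
            Finset.prod_congr rfl fun k _ => by rw [hEk k, sgnF_mul, sgnF_inv]
        _ = (∏ k, ((Equiv.Perm.sign (σ k) : ℤ) : F)) *
              ((Equiv.Perm.sign (σ la) : ℤ) : F) ^ m := by
            rw [Finset.prod_mul_distrib, Finset.prod_const, Finset.card_univ, Fintype.card_fin]
        _ = ∏ k, ((Equiv.Perm.sign (σ k) : ℤ) : F) := by rw [sgnF_even_pow hm, mul_one]
    · -- entries
      conv_rhs => rw [← Equiv.prod_comp (σ la)
        (fun x => A fun k => if k = la then I x else (E σ) k x)]
      apply Finset.prod_congr rfl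
      intro x _
      congr 1
      funext k
      by_cases hk : k = la
      · rw [if_pos hk, if_pos hk, hk]
      · rw [if_neg hk, if_neg hk, hEk k, Equiv.Perm.mul_apply, Equiv.Perm.inv_def, Equiv.symm_apply_apply]
  · have hc : ¬ ∀ k : Fin m, k.1 = 0 → σ k = 1 := fun h => h1 ((cond0_iff hm0 σ).1 h)
    have hEla : E σ la ≠ 1 := by rw [hE]; simpa using h1
    rw [if_neg hc, if_neg hEla]
/-! ### Step B helpers -/

section StepBHelp

variable {l n : ℕ}

lemma mul_Pblk_sndFac_inv (π : Equiv.Perm (Fin (l * n))) :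
    π * (Pblk l n (sndFac π))⁻¹ = fstFac π := by
  calc π * (Pblk l n (sndFac π))⁻¹
      = fstFac π * Pblk l n (sndFac π) * (Pblk l n (sndFac π))⁻¹ := by rw [← fac_eq]
    _ = fstFac π := by rw [mul_inv_cancel_right]

lemma sgnF_Pblk (r : Fin n → Equiv.Perm (Fin l)) :
    ((Equiv.Perm.sign (Pblk l n r) : ℤ) : F) = ∏ j, ((Equiv.Perm.sign (r j) : ℤ) : F) := by
  rw [sign_Pblk, Units.coe_prod, Int.cast_prod]

end StepBHelp

/-! ### Step B: the block expansion side -/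

lemma stepB (m l n : ℕ) (hm : Even m) (hm0 : 0 < m)
    (A : (Fin m → Fin (l * n)) → F) (I : Fin (l * n) → Fin (l * n)) :
    (∑ σ : Fin m → Equiv.Perm (Fin (l * n)),
        if (∀ s, BlockInc l n (σ s)) ∧ σ (⟨m - 1, by omega⟩ : Fin m) = 1 then
          (∏ s, ((Equiv.Perm.sign (σ s) : ℤ) : F)) *
            ∏ j : Fin n,
              hyperdet m l (fun a : Fin m → Fin l =>
                A fun k =>
                  if k = (⟨m - 1, by omega⟩ : Fin m) then I (blk l n j (a k))
                  else σ k (blk l n j (a k)))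
        else 0)
    = ∑ ν : Fin m → Equiv.Perm (Fin (l * n)),
        if ν ⟨m - 1, by omega⟩ = 1 then
          (∏ k, ((Equiv.Perm.sign (ν k) : ℤ) : F)) *
            ∏ x, A (fun k => if k = (⟨m - 1, by omega⟩ : Fin m) then I x else ν k x)
        else 0 := by
  have hm2 : 2 ≤ m := by obtain ⟨t, rfl⟩ := hm; omega
  set la : Fin m := ⟨m - 1, by omega⟩ with hla
  set fz : Fin m := ⟨0, hm0⟩ with hfz
  have hne : fz ≠ la := by
    simp only [hfz, hla, ne_eq, Fin.mk.injEq]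
    omega
  -- abbreviations
  set C₁ : (Fin m → Equiv.Perm (Fin (l * n))) → Prop :=
    fun σ => (∀ s, BlockInc l n (σ s)) ∧ σ la = 1 with hC₁
  set ent : (Fin m → Equiv.Perm (Fin (l * n))) → Fin n → (Fin m → Equiv.Perm (Fin l)) → F :=
    fun σ j τ => ∏ i : Fin l,
      A fun k => if k = la then I (blk l n j (τ k i)) else σ k (blk l n j (τ k i)) with hent
  -- Phase 1: expand the inner hyperdeterminants
  have phase1 : ∀ σ : Fin m → Equiv.Perm (Fin (l * n)),
      (if C₁ σ then
          (∏ s, ((Equiv.Perm.sign (σ s) : ℤ) : F)) *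
            ∏ j : Fin n,
              hyperdet m l (fun a : Fin m → Fin l =>
                A fun k =>
                  if k = la then I (blk l n j (a k))
                  else σ k (blk l n j (a k)))
        else 0)
      = ∑ T : Fin n → (Fin m → Equiv.Perm (Fin l)),
          if C₁ σ ∧ (∀ j, ∀ k : Fin m, k.1 = 0 → T j k = 1) then
            ((∏ s, ((Equiv.Perm.sign (σ s) : ℤ) : F)) *
              ∏ j, ((∏ k, ((Equiv.Perm.sign (T j k) : ℤ) : F)) * ent σ j (T j)))
          else 0 := by
    intro σ
    by_cases hC : C₁ σ
    · rw [if_pos hC]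
      simp only [hyperdet]
      rw [Finset.prod_univ_sum]
      rw [Fintype.piFinset_univ]
      have step : ∀ T : Fin n → (Fin m → Equiv.Perm (Fin l)),
          (∏ j, if (∀ k : Fin m, k.1 = 0 → T j k = 1) then
              (∏ k, ((Equiv.Perm.sign (T j k) : ℤ) : F)) * ent σ j (T j) else 0)
          = if (∀ j, ∀ k : Fin m, k.1 = 0 → T j k = 1) then
              ∏ j, ((∏ k, ((Equiv.Perm.sign (T j k) : ℤ) : F)) * ent σ j (T j)) else 0 :=
        fun T => prod_ite_all _ _
      rw [Finset.sum_congr rfl fun T _ => step T, Finset.mul_sum]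
      apply Finset.sum_congr rfl
      intro T _
      rw [mul_ite, mul_zero]
      exact if_congr (and_iff_right hC).symm rfl rfl
    · rw [if_neg hC, eq_comm]
      apply Finset.sum_eq_zero
      intro T _
      rw [if_neg]
      tauto
  rw [Finset.sum_congr rfl fun σ _ => phase1 σ, ← Fintype.sum_prod_type']
  beta_reduce
  rw [← Finset.sum_filter, ← Finset.sum_filter]
  -- Phase 2: the bijection
  set fwd : ((Fin m → Equiv.Perm (Fin (l * n))) × (Fin n → Fin m → Equiv.Perm (Fin l)))
      → (Fin m → Equiv.Perm (Fin (l * n))) :=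
    fun p k => p.1 k * Pblk l n (fun j => p.2 j k) * (Pblk l n (fun j => p.2 j la))⁻¹ with hfwd
  set bwd : (Fin m → Equiv.Perm (Fin (l * n)))
      → ((Fin m → Equiv.Perm (Fin (l * n))) × (Fin n → Fin m → Equiv.Perm (Fin l))) :=
    fun ν => (fun k => fstFac (ν k * (Pblk l n (sndFac (ν fz)))⁻¹),
              fun j k => sndFac (ν k * (Pblk l n (sndFac (ν fz)))⁻¹) j) with hbwd
  apply Finset.sum_nbij' fwd bwd
  · -- fwd maps into target filter
    rintro ⟨σ, T⟩ hmem
    simp only [Finset.mem_filter, Finset.mem_univ, true_and] at hmem ⊢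
    obtain ⟨⟨hbi, hla1⟩, hT⟩ := hmem
    show σ la * _ * _ = 1
    rw [hla1, one_mul, mul_inv_cancel]
  · -- bwd maps into source filter
    intro ν hmem
    simp only [Finset.mem_filter, Finset.mem_univ, true_and] at hmem ⊢
    refine ⟨⟨fun s => blockInc_fstFac _, ?_⟩, ?_⟩
    · show fstFac (ν la * _) = 1
      rw [hmem, one_mul, Pblk_inv]
      exact (fstFac_of_Pblk _).1
    · intro j k hk
      have : k = fz := Fin.ext hk
      subst this
      show sndFac (ν fz * (Pblk l n (sndFac (ν fz)))⁻¹) j = 1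
      rw [mul_Pblk_sndFac_inv, (fstFac_of_blockInc _ (blockInc_fstFac _)).2]
      rfl
  · -- left inverse
    rintro ⟨σ, T⟩ hmem
    simp only [Finset.mem_filter, Finset.mem_univ, true_and] at hmem
    obtain ⟨⟨hbi, hla1⟩, hT⟩ := hmem
    have hTfz : (fun j => T j fz) = 1 := funext fun j => hT j fz rfl
    have hνfz : fwd (σ, T) fz = σ fz * Pblk l n (fun j => (T j la)⁻¹) := by
      show σ fz * Pblk l n (fun j => T j fz) * _ = _
      rw [hTfz, Pblk_one, mul_one, Pblk_inv]
    have hfac := fac_unique (σ fz) (fun j => (T j la)⁻¹) (hbi fz)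
    have hPinv : (Pblk l n (sndFac (fwd (σ, T) fz)))⁻¹ = Pblk l n (fun j => T j la) := by
      rw [hνfz, hfac.2, Pblk_inv]
      simp only [inv_inv]
    have hμ : ∀ k, fwd (σ, T) k * (Pblk l n (sndFac (fwd (σ, T) fz)))⁻¹
        = σ k * Pblk l n (fun j => T j k) := by
      intro k
      rw [hPinv]
      show σ k * _ * (Pblk l n fun j => T j la)⁻¹ * _ = _
      rw [inv_mul_cancel_right]
    have hfack : ∀ k, fstFac (σ k * Pblk l n (fun j => T j k)) = σ k ∧
        sndFac (σ k * Pblk l n (fun j => T j k)) = fun j => T j k :=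
      fun k => fac_unique (σ k) _ (hbi k)
    show bwd (fwd (σ, T)) = (σ, T)
    rw [hbwd]
    refine Prod.ext ?_ ?_
    · funext k
      show fstFac (fwd (σ, T) k * _) = σ k
      rw [hμ k, (hfack k).1]
    · funext j k
      show sndFac (fwd (σ, T) k * _) j = T j k
      rw [hμ k, (hfack k).2]
  · -- right inverse
    intro ν hmem
    simp only [Finset.mem_filter, Finset.mem_univ, true_and] at hmem
    set c := (Pblk l n (sndFac (ν fz)))⁻¹ with hc
    have hμla : ν la * c = Pblk l n (fun j => (sndFac (ν fz) j)⁻¹) := by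
      rw [hmem, one_mul, hc, Pblk_inv]
    have hsnd : sndFac (ν la * c) = fun j => (sndFac (ν fz) j)⁻¹ := by
      rw [hμla]
      exact (fstFac_of_Pblk _).2
    show fwd (bwd ν) = ν
    funext k
    show fstFac (ν k * c) * Pblk l n (fun j => sndFac (ν k * c) j)
        * (Pblk l n (fun j => sndFac (ν la * c) j))⁻¹ = ν k
    have h1 : (fun j => sndFac (ν k * c) j) = sndFac (ν k * c) := rfl
    have h2 : (fun j => sndFac (ν la * c) j) = sndFac (ν la * c) := rfl
    rw [h1, h2, ← fac_eq, hsnd, ← Pblk_inv, ← hc, mul_inv_cancel_right]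
  · -- summand equality
    rintro ⟨σ, T⟩ hmem
    simp only [Finset.mem_filter, Finset.mem_univ, true_and] at hmem
    obtain ⟨⟨hbi, hla1⟩, hT⟩ := hmem
    set Q := Pblk l n (fun j => T j la) with hQ
    have hfk : ∀ k, fwd (σ, T) k = σ k * Pblk l n (fun j => T j k) * Q⁻¹ := fun k => rfl
    have hsgn : (∏ k, ((Equiv.Perm.sign (fwd (σ, T) k) : ℤ) : F))
        = (∏ s, ((Equiv.Perm.sign (σ s) : ℤ) : F)) *
            ∏ j, ∏ k, ((Equiv.Perm.sign (T j k) : ℤ) : F) := by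
      calc ∏ k, ((Equiv.Perm.sign (fwd (σ, T) k) : ℤ) : F)
          = ∏ k, (((Equiv.Perm.sign (σ k) : ℤ) : F) *
              (∏ j, ((Equiv.Perm.sign (T j k) : ℤ) : F)) * ((Equiv.Perm.sign Q : ℤ) : F)) :=
            Finset.prod_congr rfl fun k _ => by
              rw [hfk k, sgnF_mul, sgnF_mul, sgnF_inv, sgnF_Pblk]
        _ = ((∏ k, ((Equiv.Perm.sign (σ k) : ℤ) : F)) *
              ∏ k : Fin m, ∏ j, ((Equiv.Perm.sign (T j k) : ℤ) : F)) *
              ((Equiv.Perm.sign Q : ℤ) : F) ^ m := by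
            rw [Finset.prod_mul_distrib, Finset.prod_mul_distrib, Finset.prod_const,
              Finset.card_univ, Fintype.card_fin]
        _ = _ := by rw [sgnF_even_pow hm, mul_one, Finset.prod_comm]
    have hentp : (∏ x, A fun k => if k = la then I x else fwd (σ, T) k x)
        = ∏ j, ent σ j (T j) := by
      conv_lhs => rw [← Equiv.prod_comp Q
        (fun x => A fun k => if k = la then I x else fwd (σ, T) k x)]
      rw [prod_blk]
      apply Finset.prod_congr rfl
      intro j _
      apply Finset.prod_congr rfl
      intro i _
      congr 1
      funext k
      by_cases hk : k = la
      · subst hk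
        rw [if_pos rfl, if_pos rfl, hQ, Pblk_apply]
      · rw [if_neg hk, if_neg hk, hfk k, Equiv.Perm.mul_apply, Equiv.Perm.mul_apply,
          Equiv.Perm.inv_def, Equiv.symm_apply_apply, Pblk_apply]
    show _ = (∏ k, ((Equiv.Perm.sign (fwd (σ, T) k) : ℤ) : F)) *
        ∏ x, A fun k => if k = la then I x else fwd (σ, T) k x
    rw [hsgn, hentp, mul_assoc, ← Finset.prod_mul_distrib]
/-- Block Laplace expansion (Lemma on hyperdeterminant minors). -/
theorem hyperdet_block_laplace (m l n : ℕ) (hm : Even m) (hm0 : 0 < m) (hl : 0 < l)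
    (hn : 0 < n) (A : (Fin m → Fin (l * n)) → F) (I : Fin (l * n) → Fin (l * n)) :
    hyperdet m (l * n)
        (fun a => A fun k => if k = (⟨m - 1, by omega⟩ : Fin m) then I (a k) else a k)
    = ∑ σ : Fin m → Equiv.Perm (Fin (l * n)),
        if (∀ s, BlockInc l n (σ s)) ∧ σ (⟨m - 1, by omega⟩ : Fin m) = 1 then
          (∏ s, ((Equiv.Perm.sign (σ s) : ℤ) : F)) *
            ∏ j : Fin n,
              hyperdet m l (fun a : Fin m → Fin l =>
                A fun k =>
                  if k = (⟨m - 1, by omega⟩ : Fin m) then I (blk l n j (a k))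
                  else σ k (blk l n j (a k)))
        else 0 := by
  exact (stepA m (l * n) hm hm0 A I).trans (stepB m l n hm hm0 A I).symm
end
end

section
/- (Reduction of Pf^[l,m] to Barvinok's hyperpfaffian) Given an m-dimensional l-block array B of size ln, define the 1-dimensional lm-block array B̃ of size lmn by B̃(J) = B(I^(1),…,I^(m)) if J = (j(1),…,j(lm)) satisfies j(l(s−1)+k) = ln(s−1) + i^(s)(k) for all 1 ≤ s ≤ m, 1 ≤ k ≤ l (for some l-subsets I^(s) = (i^(s)(1),…,i^(s)(l)) of [ln]), and B̃(J) = 0 otherwise. Then Pf^[l,m](B) = Pf^[lm,1](B̃). -/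
open scoped Classical
open Finset Equiv

noncomputable section

variable {F : Type*} [Field F] [CharZero F]

/-- The shift embedding of the `s`-th copy of `[l*n]` into `[l*m*n]`. -/
def shiftEmb (l m n : ℕ) (s : Fin m) (j : Fin (l * n)) : Fin (l * m * n) :=
  ⟨l * n * s.1 + j.1, by
    have hj := j.2; have hs := s.2
    calc l * n * s.1 + j.1 < l * n * (s.1 + 1) := by rw [Nat.mul_add, Nat.mul_one]; omega
      _ ≤ l * n * m := Nat.mul_le_mul_left _ hs
      _ = l * m * n := by ring⟩

namespace BarvAux

/-- Product equivalence with explicit strides: `(x, y) ↦ x * b + y`. -/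
def pEquiv (a b : ℕ) (hb : 0 < b) : Fin a × Fin b ≃ Fin (a * b) where
  toFun x := ⟨x.1.1 * b + x.2.1, by
    have h1 := x.1.2; have h2 := x.2.2
    calc x.1.1 * b + x.2.1 < (x.1.1 + 1) * b := by rw [Nat.add_mul]; omega
      _ ≤ a * b := Nat.mul_le_mul_right b h1⟩
  invFun z := (⟨z.1 / b, Nat.div_lt_of_lt_mul (Nat.mul_comm a b ▸ z.2)⟩,
    ⟨z.1 % b, Nat.mod_lt _ hb⟩)
  left_inv := by
    rintro ⟨⟨x, hx⟩, ⟨y, hy⟩⟩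
    have h1 : (x * b + y) / b = x := by
      rw [Nat.mul_comm, Nat.mul_add_div hb, Nat.div_eq_of_lt hy, Nat.add_zero]
    have h2 : (x * b + y) % b = y := by
      rw [Nat.mul_add_mod', Nat.mod_eq_of_lt hy]
    simp only [Prod.mk.injEq]
    exact ⟨Fin.ext h1, Fin.ext h2⟩
  right_inv := by
    rintro ⟨z, hz⟩
    exact Fin.ext (Nat.div_add_mod' z b)

@[simp] lemma pEquiv_apply_val (a b : ℕ) (hb : 0 < b) (x : Fin a × Fin b) :
    (pEquiv a b hb x).1 = x.1.1 * b + x.2.1 := rfl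

/-- Injectivity of `blk` in both arguments. -/
lemma blk_inj (L N : ℕ) {j j' : Fin N} {i i' : Fin L}
    (h : blk L N j i = blk L N j' i') : j = j' ∧ i = i' := by
  have hv : j.1 * L + i.1 = j'.1 * L + i'.1 := congrArg Fin.val h
  have hi := i.2; have hi' := i'.2
  have hL : 0 < L := Nat.lt_of_le_of_lt (Nat.zero_le _) hi
  have hj : j.1 = j'.1 := by
    have e1 : (j.1 * L + i.1) / L = j.1 := by
      rw [Nat.mul_comm, Nat.mul_add_div hL, Nat.div_eq_of_lt hi, Nat.add_zero]
    have e2 : (j'.1 * L + i'.1) / L = j'.1 := by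
      rw [Nat.mul_comm, Nat.mul_add_div hL, Nat.div_eq_of_lt hi', Nat.add_zero]
    rw [← e1, ← e2, hv]
  have hjl : j.1 * L = j'.1 * L := by rw [hj]
  refine ⟨Fin.ext hj, Fin.ext ?_⟩
  omega

lemma blk_strictMono (L N : ℕ) (j : Fin N) : StrictMono (blk L N j) := by
  intro i i' h
  rw [Fin.lt_def] at h ⊢
  exact Nat.add_lt_add_left h _

lemma card_blkSet (L N : ℕ) (σ : Equiv.Perm (Fin (L * N))) (j : Fin N) :
    (blkSet L N σ j).card = L := by
  rw [blkSet, Finset.card_image_of_injective _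
    (fun i i' h => ((blk_inj L N) (σ.injective h)).2), Finset.card_univ, Fintype.card_fin]

lemma mem_blkSet_iff (L N : ℕ) (σ : Equiv.Perm (Fin (L * N))) (j : Fin N)
    (x : Fin (L * N)) : x ∈ blkSet L N σ j ↔ ∃ i, σ (blk L N j i) = x := by
  simp [blkSet]

/-- Every point of `[L*N]` lies in some block. -/
lemma blk_decomp (L N : ℕ) (hL : 0 < L) (x : Fin (L * N)) :
    ∃ (j : Fin N) (i : Fin L), x = blk L N j i := by
  have hx := x.2
  have hN : x.1 / L < N := Nat.div_lt_of_lt_mul hx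
  refine ⟨⟨x.1 / L, hN⟩, ⟨x.1 % L, Nat.mod_lt _ hL⟩, Fin.ext ?_⟩
  exact (Nat.div_add_mod' x.1 L).symm

/-- Distinct blocks of a permutation are disjoint. -/
lemma blkSet_disjoint (L N : ℕ) (σ : Equiv.Perm (Fin (L * N))) {j j' : Fin N}
    (h : j ≠ j') : Disjoint (blkSet L N σ j) (blkSet L N σ j') := by
  rw [Finset.disjoint_left]
  intro x hx hx'
  obtain ⟨i, hi⟩ := (mem_blkSet_iff L N σ j x).1 hx
  obtain ⟨i', hi'⟩ := (mem_blkSet_iff L N σ j' x).1 hx'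
  exact h ((blk_inj L N (σ.injective (hi.trans hi'.symm))).1)

/-- Two strictly monotone maps `Fin L → Fin K` with the same image are equal. -/
lemma strictMono_eq_of_image_eq {L K : ℕ} {f g : Fin L → Fin K}
    (hf : StrictMono f) (hg : StrictMono g)
    (h : Finset.image f Finset.univ = Finset.image g Finset.univ) : f = g := by
  have hcard : (Finset.image f Finset.univ).card = L := by
    rw [Finset.card_image_of_injective _ hf.injective, Finset.card_univ, Fintype.card_fin]
  have h1 : f = (Finset.image f Finset.univ).orderEmbOfFin hcard :=
    Finset.orderEmbOfFin_unique hcard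
      (fun x => Finset.mem_image_of_mem f (Finset.mem_univ x)) hf
  have hcard' : (Finset.image f Finset.univ).card = L := hcard
  have h2 : g = (Finset.image f Finset.univ).orderEmbOfFin hcard := by
    refine Finset.orderEmbOfFin_unique hcard (fun x => ?_) hg
    rw [h]; exact Finset.mem_image_of_mem g (Finset.mem_univ x)
  rw [h1, h2]

/-- A block-increasing permutation is determined by its blocks. -/
lemma blockInc_ext {L N : ℕ} (hL : 0 < L) {α β : Equiv.Perm (Fin (L * N))}
    (ha : BlockInc L N α) (hb : BlockInc L N β)
    (h : ∀ j, blkSet L N α j = blkSet L N β j) : α = β := by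
  apply Equiv.ext
  intro x
  obtain ⟨j, i, rfl⟩ := blk_decomp L N hL x
  have := strictMono_eq_of_image_eq (ha j) (hb j) (h j)
  exact congrFun this i

/-- Build a block-increasing permutation with prescribed blocks. -/
lemma exists_blockInc (L N : ℕ) (hL : 0 < L) (P : Fin N → Finset (Fin (L * N)))
    (hcard : ∀ j, (P j).card = L)
    (hdis : ∀ j j', j ≠ j' → Disjoint (P j) (P j')) :
    ∃ σ : Equiv.Perm (Fin (L * N)), BlockInc L N σ ∧ ∀ j, blkSet L N σ j = P j := by
  set g : Fin N × Fin L → Fin (L * N) :=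
    fun x => (P x.1).orderEmbOfFin (hcard x.1) x.2 with hg
  have ginj : Function.Injective g := by
    rintro ⟨j, i⟩ ⟨j', i'⟩ hgx
    have hmem : g (j, i) ∈ P j := Finset.orderEmbOfFin_mem _ _ _
    have hmem' : g (j', i') ∈ P j' := Finset.orderEmbOfFin_mem _ _ _
    have hjj : j = j' := by
      by_contra hne
      exact (Finset.disjoint_left.1 (hdis j j' hne)) hmem (hgx ▸ hmem')
    subst hjj
    have : i = i' := ((P j).orderEmbOfFin (hcard j)).injective hgx
    rw [this]
  have gbij : Function.Bijective g := by
    rw [Fintype.bijective_iff_injective_and_card]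
    exact ⟨ginj, by simp [Nat.mul_comm]⟩
  set E2 : Fin N × Fin L ≃ Fin (L * N) :=
    (pEquiv N L hL).trans (finCongr (Nat.mul_comm N L)) with hE2
  refine ⟨E2.symm.trans (Equiv.ofBijective g gbij), ?_, ?_⟩
  · intro j
    have key : ∀ i : Fin L,
        (E2.symm.trans (Equiv.ofBijective g gbij)) (blk L N j i) = g (j, i) := by
      intro i
      have : blk L N j i = E2 (j, i) := Fin.ext rfl
      simp [this]
    intro i i' hii
    rw [show (fun i => (E2.symm.trans (Equiv.ofBijective g gbij)) (blk L N j i))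
        = fun i => g (j, i) from funext key]
    exact ((P j).orderEmbOfFin (hcard j)).strictMono hii
  · intro j
    have key : ∀ i : Fin L,
        (E2.symm.trans (Equiv.ofBijective g gbij)) (blk L N j i) = g (j, i) := by
      intro i
      have : blk L N j i = E2 (j, i) := Fin.ext rfl
      simp [this]
    apply Finset.coe_injective
    rw [blkSet, Finset.coe_image, Finset.coe_univ, Set.image_univ]
    have : (fun i => (E2.symm.trans (Equiv.ofBijective g gbij)) (blk L N j i))
        = fun i => (P j).orderEmbOfFin (hcard j) i := funext key
    rw [this]
    exact Finset.range_orderEmbOfFin _ _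

end BarvAux
namespace BarvAux

section Phi

variable (l m n : ℕ)

/-- Index `s*l + i` inside a big block of size `l*m`. -/
def posIdx (s : Fin m) (i : Fin l) : Fin (l * m) :=
  ⟨s.1 * l + i.1, by
    have hi := i.2; have hs := s.2
    calc s.1 * l + i.1 < (s.1 + 1) * l := by rw [Nat.add_mul]; omega
      _ ≤ m * l := Nat.mul_le_mul_right l hs
      _ = l * m := Nat.mul_comm m l⟩

lemma posIdx_decomp (hl0 : 0 < l) (t : Fin (l * m)) :
    ∃ (s : Fin m) (i : Fin l), t = posIdx l m s i := by
  have ht := t.2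
  refine ⟨⟨t.1 / l, Nat.div_lt_of_lt_mul ht⟩, ⟨t.1 % l, Nat.mod_lt _ hl0⟩, Fin.ext ?_⟩
  exact (Nat.div_add_mod' t.1 l).symm

variable (hl0 : 0 < l) (hm : 0 < m) (hn : 0 < n)

def bigE : Fin (n * m) × Fin l ≃ Fin (l * m * n) :=
  (pEquiv (n * m) l hl0).trans (finCongr (by ring))

def dPerm : Equiv.Perm (Fin (n * m)) :=
  (pEquiv n m hm).symm.trans ((Equiv.prodComm _ _).trans
    ((pEquiv m n hn).trans (finCongr (Nat.mul_comm m n))))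

def piPerm : Equiv.Perm (Fin (l * m * n)) :=
  (bigE l m n hl0).permCongr (Equiv.prodCongrLeft (fun _ : Fin l => dPerm m n hm hn))

def eShift : Fin m × Fin (l * n) ≃ Fin (l * m * n) :=
  (pEquiv m (l * n) (Nat.mul_pos hl0 hn)).trans (finCongr (by ring))

def SPerm (σ : Fin m → Equiv.Perm (Fin (l * n))) : Equiv.Perm (Fin (l * m * n)) :=
  (eShift l m n hl0 hn).permCongr (Equiv.prodCongrRight σ)

def Phi (σ : Fin m → Equiv.Perm (Fin (l * n))) : Equiv.Perm (Fin (l * m * n)) :=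
  (piPerm l m n hl0 hm hn).trans (SPerm l m n hl0 hn σ)

lemma shiftEmb_eq (s : Fin m) (j : Fin (l * n)) :
    shiftEmb l m n s j = eShift l m n hl0 hn (s, j) :=
  Fin.ext (by show l * n * s.1 + j.1 = s.1 * (l * n) + j.1; ring)

lemma SPerm_apply (σ : Fin m → Equiv.Perm (Fin (l * n))) (s : Fin m) (j : Fin (l * n)) :
    SPerm l m n hl0 hn σ (shiftEmb l m n s j) = shiftEmb l m n s (σ s j) := by
  rw [shiftEmb_eq l m n hl0 hn, shiftEmb_eq l m n hl0 hn]
  unfold SPerm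
  rw [Equiv.permCongr_apply, Equiv.symm_apply_apply]
  rfl

lemma blk_posIdx_eq (k : Fin n) (s : Fin m) (i : Fin l) :
    blk (l * m) n k (posIdx l m s i) = bigE l m n hl0 (pEquiv n m hm (k, s), i) :=
  Fin.ext (by show k.1 * (l * m) + (s.1 * l + i.1) = (k.1 * m + s.1) * l + i.1; ring)

lemma dPerm_apply (k : Fin n) (s : Fin m) :
    dPerm m n hm hn (pEquiv n m hm (k, s)) =
      finCongr (Nat.mul_comm m n) (pEquiv m n hn (s, k)) := by
  unfold dPerm
  rw [Equiv.trans_apply, Equiv.symm_apply_apply]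
  rfl

lemma piPerm_apply (k : Fin n) (s : Fin m) (i : Fin l) :
    piPerm l m n hl0 hm hn (blk (l * m) n k (posIdx l m s i)) =
      shiftEmb l m n s (blk l n k i) := by
  rw [blk_posIdx_eq l m n hl0 hm]
  unfold piPerm
  rw [Equiv.permCongr_apply, Equiv.symm_apply_apply]
  rw [show (Equiv.prodCongrLeft fun _ : Fin l => dPerm m n hm hn)
      (pEquiv n m hm (k, s), i) = (dPerm m n hm hn (pEquiv n m hm (k, s)), i) from rfl,
    dPerm_apply m n hm hn]
  exact Fin.ext (by show (s.1 * n + k.1) * l + i.1 = l * n * s.1 + (k.1 * l + i.1); ring)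

lemma Phi_apply (σ : Fin m → Equiv.Perm (Fin (l * n))) (k : Fin n) (s : Fin m) (i : Fin l) :
    Phi l m n hl0 hm hn σ (blk (l * m) n k (posIdx l m s i)) =
      shiftEmb l m n s (σ s (blk l n k i)) := by
  unfold Phi
  rw [Equiv.trans_apply, piPerm_apply l m n hl0 hm hn, SPerm_apply l m n hl0 hn]

lemma sign_piPerm (hl : Even l) :
    Equiv.Perm.sign (piPerm l m n hl0 hm hn) = 1 := by
  unfold piPerm
  rw [Equiv.Perm.sign_permCongr, Equiv.Perm.sign_prodCongrLeft]
  rw [Finset.prod_const, Finset.card_univ, Fintype.card_fin]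
  obtain ⟨c, hc⟩ := hl
  rw [hc, pow_add, ← sq, Int.units_sq]

lemma sign_Phi (hl : Even l) (σ : Fin m → Equiv.Perm (Fin (l * n))) :
    Equiv.Perm.sign (Phi l m n hl0 hm hn σ) = ∏ s, Equiv.Perm.sign (σ s) := by
  have : Phi l m n hl0 hm hn σ = SPerm l m n hl0 hn σ * piPerm l m n hl0 hm hn := rfl
  rw [this, map_mul, sign_piPerm l m n hl0 hm hn hl, mul_one]
  unfold SPerm
  rw [Equiv.Perm.sign_permCongr, Equiv.Perm.sign_prodCongrRight]

lemma Phi_inj : Function.Injective (Phi l m n hl0 hm hn) := by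
  intro σ σ' h
  have hS : SPerm l m n hl0 hn σ = SPerm l m n hl0 hn σ' := by
    apply Equiv.ext
    intro x
    have hx : Phi l m n hl0 hm hn σ ((piPerm l m n hl0 hm hn).symm x)
        = Phi l m n hl0 hm hn σ' ((piPerm l m n hl0 hm hn).symm x) := by rw [h]
    have e1 : ∀ τ, Phi l m n hl0 hm hn τ ((piPerm l m n hl0 hm hn).symm x)
        = SPerm l m n hl0 hn τ x := by
      intro τ
      show SPerm l m n hl0 hn τ (piPerm l m n hl0 hm hn ((piPerm l m n hl0 hm hn).symm x))
        = _
      rw [Equiv.apply_symm_apply]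
    rw [e1, e1] at hx
    exact hx
  funext s
  apply Equiv.ext
  intro j
  have h1 : SPerm l m n hl0 hn σ (shiftEmb l m n s j)
      = SPerm l m n hl0 hn σ' (shiftEmb l m n s j) := by rw [hS]
  rw [SPerm_apply l m n hl0 hn, SPerm_apply l m n hl0 hn,
    shiftEmb_eq l m n hl0 hn, shiftEmb_eq l m n hl0 hn] at h1
  have := (eShift l m n hl0 hn).injective h1
  exact (Prod.mk.injEq _ _ _ _ ▸ this).2

lemma blockInc_Phi (σ : Fin m → Equiv.Perm (Fin (l * n)))
    (hσ : ∀ s, BlockInc l n (σ s)) : BlockInc (l * m) n (Phi l m n hl0 hm hn σ) := by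
  intro k t t' htt
  obtain ⟨s, i, rfl⟩ := posIdx_decomp l m hl0 t
  obtain ⟨s', i', rfl⟩ := posIdx_decomp l m hl0 t'
  simp only [Phi_apply l m n hl0 hm hn]
  have htv : s.1 * l + i.1 < s'.1 * l + i'.1 := htt
  have hi := i.2; have hi' := i'.2
  have hss : s.1 ≤ s'.1 := by
    by_contra hcon
    push_neg at hcon
    have : s'.1 * l + i'.1 < s.1 * l + i.1 :=
      calc s'.1 * l + i'.1 < (s'.1 + 1) * l := by rw [Nat.add_mul]; omega
        _ ≤ s.1 * l := Nat.mul_le_mul_right l hcon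
        _ ≤ s.1 * l + i.1 := Nat.le_add_right _ _
    omega
  rw [Fin.lt_def]
  show l * n * s.1 + (σ s (blk l n k i)).1 < l * n * s'.1 + (σ s' (blk l n k i')).1
  rcases Nat.lt_or_ge s.1 s'.1 with hlt | hge
  · have hv : (σ s (blk l n k i)).1 < l * n := (σ s (blk l n k i)).2
    calc l * n * s.1 + (σ s (blk l n k i)).1 < l * n * s.1 + l * n :=
          Nat.add_lt_add_left hv _
      _ = l * n * (s.1 + 1) := by ring
      _ ≤ l * n * s'.1 := Nat.mul_le_mul_left _ hlt
      _ ≤ l * n * s'.1 + (σ s' (blk l n k i')).1 := Nat.le_add_right _ _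
  · have hseq : s.1 = s'.1 := le_antisymm hss hge
    have hs2 : s = s' := Fin.ext hseq
    subst hs2
    have hii : i.1 < i'.1 := by
      have := htv
      omega
    have hmono := hσ s k (show i < i' from hii)
    rw [Fin.lt_def] at hmono
    exact Nat.add_lt_add_left hmono _

lemma blkSet_Phi (σ : Fin m → Equiv.Perm (Fin (l * n))) (k : Fin n) :
    blkSet (l * m) n (Phi l m n hl0 hm hn σ) k =
      Finset.univ.biUnion fun s : Fin m => (blkSet l n (σ s) k).image (shiftEmb l m n s) := by
  apply Finset.ext
  intro x
  simp only [Finset.mem_biUnion, Finset.mem_univ, true_and, Finset.mem_image]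
  rw [mem_blkSet_iff]
  constructor
  · rintro ⟨t, rfl⟩
    obtain ⟨s, i, rfl⟩ := posIdx_decomp l m hl0 t
    refine ⟨s, σ s (blk l n k i), ?_, (Phi_apply l m n hl0 hm hn σ k s i).symm⟩
    rw [mem_blkSet_iff]
    exact ⟨i, rfl⟩
  · rintro ⟨s, y, hy, rfl⟩
    obtain ⟨i, rfl⟩ := (mem_blkSet_iff l n (σ s) k y).1 hy
    exact ⟨posIdx l m s i, Phi_apply l m n hl0 hm hn σ k s i⟩

end Phi

end BarvAux

open BarvAux

set_option maxHeartbeats 1000000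

/-- Reduction of `Pf^[l,m]` to Barvinok's hyperpfaffian `Pf^[lm,1]`. -/
theorem hyperpf_eq_barvinok (l m n : ℕ) (hl : Even l) (hl0 : 0 < l) (hm : 0 < m)
    (hn : 0 < n) (B : (Fin m → Finset (Fin (l * n))) → F)
    (Bt : (Fin 1 → Finset (Fin (l * m * n))) → F)
    (h1 : ∀ I : Fin m → Finset (Fin (l * n)), (∀ s, (I s).card = l) →
      Bt (fun _ => Finset.univ.biUnion fun s : Fin m => (I s).image (shiftEmb l m n s))
        = B I)
    (h2 : ∀ J : Finset (Fin (l * m * n)), J.card = l * m →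
      (¬ ∃ I : Fin m → Finset (Fin (l * n)), (∀ s, (I s).card = l) ∧
        J = Finset.univ.biUnion fun s : Fin m => (I s).image (shiftEmb l m n s)) →
      Bt (fun _ => J) = 0) :
    hyperpf l n B = hyperpf (l * m) n Bt := by
  classical
  have hlm : 0 < l * m := Nat.mul_pos hl0 hm
  -- Step 1 : collapse the `Fin 1` indexing on the right-hand side.
  have step1 : (∑ σ : Fin 1 → Equiv.Perm (Fin (l * m * n)),
      if ∀ s, BlockInc (l * m) n (σ s) then
        (∏ s, ((Equiv.Perm.sign (σ s) : ℤ) : F)) *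
          ∏ k : Fin n, Bt fun s => blkSet (l * m) n (σ s) k
      else 0) =
      ∑ τ : Equiv.Perm (Fin (l * m * n)),
        if BlockInc (l * m) n τ then
          ((Equiv.Perm.sign τ : ℤ) : F) * ∏ k : Fin n, Bt fun _ => blkSet (l * m) n τ k
        else 0 := by
    apply Fintype.sum_equiv (Equiv.funUnique (Fin 1) _)
    intro σ
    have h0 : ∀ s : Fin 1, σ s = σ default := fun s => by rw [Subsingleton.elim s default]
    have he : (Equiv.funUnique (Fin 1) (Equiv.Perm (Fin (l * m * n)))) σ = σ default := rfl
    rw [he]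
    by_cases h : BlockInc (l * m) n (σ default)
    · rw [if_pos (fun s => (h0 s) ▸ h), if_pos h]
      congr 1
      · rw [show (Finset.univ : Finset (Fin 1)) = {default} from Finset.univ_unique,
          Finset.prod_singleton]
      · refine Finset.prod_congr rfl fun k _ => ?_
        congr 1
        exact funext fun s => by rw [h0 s]
    · rw [if_neg (fun hh => h (hh default)), if_neg h]
  -- Step 2 : terms whose blocks are not all of product form vanish.
  have step2 : (∑ τ : Equiv.Perm (Fin (l * m * n)),
      if BlockInc (l * m) n τ then
        ((Equiv.Perm.sign τ : ℤ) : F) * ∏ k : Fin n, Bt fun _ => blkSet (l * m) n τ k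
      else 0) =
      ∑ τ : Equiv.Perm (Fin (l * m * n)),
        if BlockInc (l * m) n τ ∧ (∀ k : Fin n,
            ∃ I : Fin m → Finset (Fin (l * n)), (∀ s, (I s).card = l) ∧
              blkSet (l * m) n τ k =
                Finset.univ.biUnion fun s : Fin m => (I s).image (shiftEmb l m n s)) then
          ((Equiv.Perm.sign τ : ℤ) : F) * ∏ k : Fin n, Bt fun _ => blkSet (l * m) n τ k
        else 0 := by
    refine Finset.sum_congr rfl fun τ _ => ?_
    by_cases h : BlockInc (l * m) n τ
    · by_cases hp : ∀ k : Fin n,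
          ∃ I : Fin m → Finset (Fin (l * n)), (∀ s, (I s).card = l) ∧
            blkSet (l * m) n τ k =
              Finset.univ.biUnion fun s : Fin m => (I s).image (shiftEmb l m n s)
      · rw [if_pos h, if_pos ⟨h, hp⟩]
      · rw [if_pos h, if_neg (fun hh => hp hh.2)]
        push_neg at hp
        obtain ⟨k0, hk0⟩ := hp
        have hz : Bt (fun _ => blkSet (l * m) n τ k0) = 0 := by
          apply h2 _ (card_blkSet (l * m) n τ k0)
          rintro ⟨I, hI1, hI2⟩
          exact (hk0 I hI1) hI2
        rw [Finset.prod_eq_zero (Finset.mem_univ k0) hz, mul_zero]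
    · rw [if_neg h, if_neg (fun hh => h hh.1)]
  -- Step 3 : the bijection `Phi`.
  have step3 : (∑ σ : Fin m → Equiv.Perm (Fin (l * n)),
      if ∀ s, BlockInc l n (σ s) then
        (∏ s, ((Equiv.Perm.sign (σ s) : ℤ) : F)) *
          ∏ k : Fin n, B fun s => blkSet l n (σ s) k
      else 0) =
      ∑ τ : Equiv.Perm (Fin (l * m * n)),
        if BlockInc (l * m) n τ ∧ (∀ k : Fin n,
            ∃ I : Fin m → Finset (Fin (l * n)), (∀ s, (I s).card = l) ∧
              blkSet (l * m) n τ k =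
                Finset.univ.biUnion fun s : Fin m => (I s).image (shiftEmb l m n s)) then
          ((Equiv.Perm.sign τ : ℤ) : F) * ∏ k : Fin n, Bt fun _ => blkSet (l * m) n τ k
        else 0 := by
    rw [← Finset.sum_filter, ← Finset.sum_filter]
    refine Finset.sum_bij (fun σ _ => Phi l m n hl0 hm hn σ) ?_ ?_ ?_ ?_
    · -- maps into the target filter
      intro σ hσ
      rw [Finset.mem_filter] at hσ ⊢
      refine ⟨Finset.mem_univ _, blockInc_Phi l m n hl0 hm hn σ hσ.2, fun k => ?_⟩
      exact ⟨fun s => blkSet l n (σ s) k, fun s => card_blkSet l n (σ s) k,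
        blkSet_Phi l m n hl0 hm hn σ k⟩
    · -- injectivity
      intro σ hσ σ' hσ' h
      exact Phi_inj l m n hl0 hm hn h
    · -- surjectivity
      intro τ hτ
      rw [Finset.mem_filter] at hτ
      obtain ⟨-, hτinc, hτprod⟩ := hτ
      choose I hIcard hIset using hτprod
      have hdisj : ∀ s : Fin m, ∀ k k' : Fin n, k ≠ k' → Disjoint (I k s) (I k' s) := by
        intro s k k' hkk
        rw [Finset.disjoint_left]
        intro x hx hx'
        have hmem : shiftEmb l m n s x ∈ blkSet (l * m) n τ k := by
          rw [hIset k]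
          exact Finset.mem_biUnion.2 ⟨s, Finset.mem_univ s,
            Finset.mem_image_of_mem _ hx⟩
        have hmem' : shiftEmb l m n s x ∈ blkSet (l * m) n τ k' := by
          rw [hIset k']
          exact Finset.mem_biUnion.2 ⟨s, Finset.mem_univ s,
            Finset.mem_image_of_mem _ hx'⟩
        exact (Finset.disjoint_left.1 (blkSet_disjoint (l * m) n τ hkk)) hmem hmem'
      have hex : ∀ s : Fin m, ∃ σs : Equiv.Perm (Fin (l * n)),
          BlockInc l n σs ∧ ∀ k, blkSet l n σs k = I k s := by
        intro s
        exact exists_blockInc l n hl0 (fun k => I k s) (fun k => hIcard k s)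
          (fun k k' h => hdisj s k k' h)
      choose σs hσinc hσset using hex
      refine ⟨σs, Finset.mem_filter.2 ⟨Finset.mem_univ _, hσinc⟩, ?_⟩
      apply blockInc_ext hlm (blockInc_Phi l m n hl0 hm hn σs hσinc) hτinc
      intro k
      rw [blkSet_Phi l m n hl0 hm hn σs k, hIset k]
      refine Finset.biUnion_congr rfl fun s _ => ?_
      rw [hσset s k]
    · -- values agree
      intro σ hσ
      rw [Finset.mem_filter] at hσ
      congr 1
      · rw [sign_Phi l m n hl0 hm hn hl σ]
        exact (map_prod ((Int.castRingHom F).toMonoidHom.comp (Units.coeHom ℤ))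
          (fun s => Equiv.Perm.sign (σ s)) Finset.univ).symm
      · refine Finset.prod_congr rfl fun k _ => ?_
        rw [blkSet_Phi l m n hl0 hm hn σ k,
          h1 (fun s => blkSet l n (σ s) k) (fun s => card_blkSet l n (σ s) k)]
  have main := step3.trans (step2.symm.trans step1.symm)
  unfold hyperpf
  congr 1
  convert main using 2
  all_goals
    first
      | exact congrArg (fun i => @Finset.univ _ i) (Subsingleton.elim _ _)
      | exact ite_congr rfl (fun _ => rfl) (fun _ => rfl)
end
end
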